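/- arXiv:0712.0489 — 4 statements merged into one kernel-verified Lean document; each statement's English description precedes it below -/
import Mathlib

section
/- Let G be an infinite (g,o)-growing graph with g ≥ 1 and maximal degree Δ < ∞, set δ = 1 + log(Δ+1) and β′ = 2gβ − δ. There exist β₀ > 0 and c > 0, depending only on Δ and g, such that for every β ≥ β₀, every i ∈ {0,…,m}, every x ∈ L_i, and every τ ∈ Ω⁺: letting τ^{x,+} and τ^{x,−} be τ with spin +1, respectively −1, at x, one has μ_{F_{i+1}}^{τ^{x,+}}(σ)/μ_{F_{i+1}}^{τ^{x,−}}(σ) ≤ 1 + c e^{−β′} for every configuration σ of the spins on F_{i+1}. -/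
set_option maxHeartbeats 1600000
set_option linter.unusedSectionVars false
set_option linter.unusedVariables false


/- Common framework: Ising model with boundary conditions on (finite pieces of)
   locally finite graphs, heat-bath Glauber dynamics quantities. -/

open Finset
open scoped Classical

noncomputable section

namespace IsingGlauber

/-- The real spin value of a Boolean spin: `true ↦ +1`, `false ↦ -1`. -/
def spin (b : Bool) : ℝ := if b then 1 else -1

variable {V : Type*}

/-- Neighbourhood finset of a vertex, from an explicit local finiteness witness. -/
def nbr (G : SimpleGraph V) (hlf : G.LocallyFinite) (x : V) : Finset V :=
  @SimpleGraph.neighborFinset V G x (hlf x)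

/-- `G` is `(g,o)`-growing: every vertex `x` (say at distance `r` from `o`) has at
    least `g` more neighbours in level `r+1` than in the ball of radius `r`. -/
def IsGrowing (G : SimpleGraph V) (hlf : G.LocallyFinite) (g : ℕ) (o : V) : Prop :=
  ∀ x : V,
    ((nbr G hlf x).filter fun z => G.dist o z ≤ G.dist o x).card + g ≤
      ((nbr G hlf x).filter fun z => G.dist o z = G.dist o x + 1).card

variable [DecidableEq V]

/-- External vertex boundary of a finite vertex set. -/
def vbd (G : SimpleGraph V) (hlf : G.LocallyFinite) (A : Finset V) : Finset V :=
  A.biUnion (fun a => nbr G hlf a) \ A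

/-- Closure `A ∪ ∂_V A` of a finite vertex set. -/
def cl (G : SimpleGraph V) (hlf : G.LocallyFinite) (A : Finset V) : Finset V :=
  A ∪ vbd G hlf A

/-- Ising Hamiltonian (zero field) with boundary: `Σ_{(x,y) ∈ E(A ∪ ∂_V A)} σ_x σ_y`,
    the sum over edges with both endpoints in `A ∪ ∂_V A` (each edge counted once). -/
def energyB (G : SimpleGraph V) (hlf : G.LocallyFinite) (A : Finset V) (σ : V → Bool) : ℝ :=
  (1 / 2) * ∑ x ∈ cl G hlf A, ∑ y ∈ (cl G hlf A).filter (fun y => G.Adj x y),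
    spin (σ x) * spin (σ y)

/-- Free-boundary Ising Hamiltonian: `Σ_{(x,y) ∈ E(A)} σ_x σ_y`,
    the sum over edges with both endpoints in `A` (each edge counted once). -/
def energyF (G : SimpleGraph V) (A : Finset V) (σ : V → Bool) : ℝ :=
  (1 / 2) * ∑ x ∈ A, ∑ y ∈ A.filter (fun y => G.Adj x y), spin (σ x) * spin (σ y)

/-- The configuration equal to `p` on `A` and to `η` off `A`. -/
def patch (A : Finset V) (η : V → Bool) (p : ∀ a ∈ A, Bool) : V → Bool :=
  fun v => if h : v ∈ A then p v h else η v

/-- Unnormalised Gibbs sum over configurations agreeing with `η` off `A`,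
    with energy functional `E` (which should already include the factor `β`). -/
def wsum (E : (V → Bool) → ℝ) (A : Finset V) (η : V → Bool) (f : (V → Bool) → ℝ) : ℝ :=
  ∑ p ∈ A.pi (fun _ => (Finset.univ : Finset Bool)),
    Real.exp (E (patch A η p)) * f (patch A η p)

/-- Gibbs expectation of `f` for the measure on region `A` with boundary condition `η`. -/
def gExp (E : (V → Bool) → ℝ) (A : Finset V) (η : V → Bool) (f : (V → Bool) → ℝ) : ℝ :=
  wsum E A η f / wsum E A η (fun _ => 1)

/-- Gibbs probability of an event. -/
def gProb (E : (V → Bool) → ℝ) (A : Finset V) (η : V → Bool) (P : (V → Bool) → Prop) : ℝ :=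
  gExp E A η (fun σ => if P σ then 1 else 0)

/-- Gibbs variance of `f`. -/
def gVar (E : (V → Bool) → ℝ) (A : Finset V) (η : V → Bool) (f : (V → Bool) → ℝ) : ℝ :=
  gExp E A η (fun σ => f σ ^ 2) - gExp E A η f ^ 2

/-- Dirichlet form of the heat-bath Glauber dynamics:
    `D(f) = Σ_{x ∈ A} μ(Var_x(f))`, where `Var_x(f)(σ)` is the variance of `f`
    under the one-site conditional Gibbs measure at `x` given `σ` elsewhere. -/
def dirich (E : (V → Bool) → ℝ) (A : Finset V) (η : V → Bool) (f : (V → Bool) → ℝ) : ℝ :=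
  ∑ x ∈ A, gExp E A η (fun σ => gVar E {x} σ f)

/-- Spectral gap `c_gap(μ) = inf { D(f)/Var(f) : Var(f) ≠ 0 }`. -/
def cgap (E : (V → Bool) → ℝ) (A : Finset V) (η : V → Bool) : ℝ :=
  sInf {r : ℝ | ∃ f : (V → Bool) → ℝ, gVar E A η f ≠ 0 ∧ r = dirich E A η f / gVar E A η f}

/-- The edge boundary of `C`, encoded as ordered pairs `(u,v)` with `u ∈ C`,
    `v ∉ C` and `u ~ v`; these pairs are in bijection with the boundary edges. -/
def obd (G : SimpleGraph V) (hlf : G.LocallyFinite) (C : Finset V) : Finset (V × V) :=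
  (C ×ˢ C.biUnion (fun c => nbr G hlf c)).filter (fun p => G.Adj p.1 p.2 ∧ p.2 ∉ C)


/-! ### Auxiliary machinery for `statement14` -/

set_option linter.unusedSectionVars false
set_option linter.unusedVariables false
set_option maxHeartbeats 1600000

section Aux
variable {G : SimpleGraph V} {hlf : G.LocallyFinite}

-- basics
lemma spin_true : spin true = 1 := rfl
lemma spin_false : spin false = -1 := rfl
lemma spin_not (b : Bool) : spin (!b) = - spin b := by cases b <;> simp [spin]
lemma spin_le_one (b : Bool) : spin b ≤ 1 := by cases b <;> simp [spin]
lemma neg_one_le_spin (b : Bool) : -1 ≤ spin b := by cases b <;> simp [spin]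

variable {G : SimpleGraph V} {hlf : G.LocallyFinite}

lemma mem_nbr {u v : V} : v ∈ nbr G hlf u ↔ G.Adj u v := by
  simp [nbr]

lemma subset_cl (A : Finset V) : A ⊆ cl G hlf A := Finset.subset_union_left

lemma nbr_subset_cl {A : Finset V} {u : V} (hu : u ∈ A) : nbr G hlf u ⊆ cl G hlf A := by
  intro v hv
  by_cases h : v ∈ A
  · exact subset_cl A h
  · exact Finset.mem_union_right _ (Finset.mem_sdiff.2 ⟨Finset.mem_biUnion.2 ⟨u, hu, hv⟩, h⟩)

lemma cl_filter_adj_eq_nbr {A : Finset V} {u : V} (hu : u ∈ A) :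
    (cl G hlf A).filter (fun v => G.Adj u v) = nbr G hlf u := by
  ext v
  simp only [Finset.mem_filter, mem_nbr]
  exact ⟨fun h => h.2, fun h => ⟨nbr_subset_cl hu (mem_nbr.2 h), h⟩⟩

lemma dist_adj_le (hconn : G.Connected) {o u v : V} (ha : G.Adj u v) :
    G.dist o v ≤ G.dist o u + 1 := by
  calc G.dist o v ≤ G.dist o u + G.dist u v := hconn.dist_triangle
  _ ≤ G.dist o u + 1 := by
      have : G.dist u v = 1 := SimpleGraph.dist_eq_one_iff_adj.2 ha
      omega

def flipSet (C : Finset V) (σ : V → Bool) : V → Bool := fun v => if v ∈ C then !(σ v) else σ v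

lemma adj_pair_swap (T C : Finset V) (F : V → V → ℝ) (hsym : ∀ u v, F u v = F v u) :
    ∑ u ∈ T, ∑ v ∈ T, (if u ∈ C ∧ v ∉ C ∧ G.Adj u v then F u v else 0)
    = ∑ u ∈ T, ∑ v ∈ T, (if u ∉ C ∧ v ∈ C ∧ G.Adj u v then F u v else 0) := by
  rw [Finset.sum_comm]
  refine Finset.sum_congr rfl fun u _ => Finset.sum_congr rfl fun v _ => ?_
  have hc : (v ∈ C ∧ u ∉ C ∧ G.Adj v u) ↔ (u ∉ C ∧ v ∈ C ∧ G.Adj u v) := by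
    constructor <;> rintro ⟨a, b, c⟩ <;> exact ⟨b, a, c.symm⟩
  exact if_congr hc (hsym v u) rfl

lemma energy_flip (A C : Finset V) (σ : V → Bool) :
    energyB G hlf A (flipSet C σ) = energyB G hlf A σ
      - 2 * ∑ u ∈ (cl G hlf A) ∩ C, ∑ v ∈ ((cl G hlf A).filter (fun v => G.Adj u v)) \ C,
          spin (σ u) * spin (σ v) := by
  classical
  set T := cl G hlf A with hT
  have key : ∀ u v : V, spin (flipSet C σ u) * spin (flipSet C σ v)
      = spin (σ u) * spin (σ v)
        - ((if u ∈ C ∧ v ∉ C then 2 * (spin (σ u) * spin (σ v)) else 0)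
           + (if u ∉ C ∧ v ∈ C then 2 * (spin (σ u) * spin (σ v)) else 0)) := by
    intro u v
    by_cases h1 : u ∈ C <;> by_cases h2 : v ∈ C <;>
      simp [flipSet, h1, h2, spin_not] <;> ring
  have expand1 :
      (∑ u ∈ T, ∑ v ∈ T.filter (fun v => G.Adj u v),
        (if u ∈ C ∧ v ∉ C then 2 * (spin (σ u) * spin (σ v)) else 0))
      = ∑ u ∈ T, ∑ v ∈ T,
        (if u ∈ C ∧ v ∉ C ∧ G.Adj u v then 2 * (spin (σ u) * spin (σ v)) else 0) := by
    refine Finset.sum_congr rfl fun u _ => ?_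
    rw [Finset.sum_filter]
    refine Finset.sum_congr rfl fun v _ => ?_
    by_cases h1 : u ∈ C <;> by_cases h2 : v ∈ C <;> by_cases h3 : G.Adj u v <;> simp [h1, h2, h3]
  have expand2 :
      (∑ u ∈ T, ∑ v ∈ T.filter (fun v => G.Adj u v),
        (if u ∉ C ∧ v ∈ C then 2 * (spin (σ u) * spin (σ v)) else 0))
      = ∑ u ∈ T, ∑ v ∈ T,
        (if u ∉ C ∧ v ∈ C ∧ G.Adj u v then 2 * (spin (σ u) * spin (σ v)) else 0) := by
    refine Finset.sum_congr rfl fun u _ => ?_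
    rw [Finset.sum_filter]
    refine Finset.sum_congr rfl fun v _ => ?_
    by_cases h1 : u ∈ C <;> by_cases h2 : v ∈ C <;> by_cases h3 : G.Adj u v <;> simp [h1, h2, h3]
  have swap := adj_pair_swap (G := G) T C (fun u v => 2 * (spin (σ u) * spin (σ v)))
      (fun u v => by ring)
  have hsplit : energyB G hlf A (flipSet C σ) = energyB G hlf A σ
      - (1/2) * ((∑ u ∈ T, ∑ v ∈ T, (if u ∈ C ∧ v ∉ C ∧ G.Adj u v then
            2 * (spin (σ u) * spin (σ v)) else 0))
         + (∑ u ∈ T, ∑ v ∈ T, (if u ∉ C ∧ v ∈ C ∧ G.Adj u v then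
            2 * (spin (σ u) * spin (σ v)) else 0))) := by
    unfold energyB
    rw [← hT]
    simp only [key]
    rw [← expand1, ← expand2]
    simp only [Finset.sum_sub_distrib, Finset.sum_add_distrib]
    ring
  rw [hsplit, ← swap]
  have collapse : (∑ u ∈ T, ∑ v ∈ T, (if u ∈ C ∧ v ∉ C ∧ G.Adj u v then
        2 * (spin (σ u) * spin (σ v)) else 0))
      = 2 * ∑ u ∈ T ∩ C, ∑ v ∈ (T.filter (fun v => G.Adj u v)) \ C,
          spin (σ u) * spin (σ v) := by
    rw [Finset.mul_sum]
    rw [← Finset.sum_filter_add_sum_filter_not T (fun u => u ∈ C)]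
    have h2 : ∀ u ∈ T.filter (fun u => u ∉ C),
        (∑ v ∈ T, (if u ∈ C ∧ v ∉ C ∧ G.Adj u v then 2 * (spin (σ u) * spin (σ v)) else 0)) = 0 := by
      intro u hu
      have := (Finset.mem_filter.1 hu).2
      refine Finset.sum_eq_zero fun v _ => ?_
      simp [this]
    rw [Finset.sum_congr rfl h2, Finset.sum_const, smul_zero, add_zero]
    have : T.filter (fun u => u ∈ C) = T ∩ C := by
      ext u; simp [Finset.mem_inter]
    rw [this]
    refine Finset.sum_congr rfl fun u hu => ?_
    have huC : u ∈ C := (Finset.mem_inter.1 hu).2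
    have : (T.filter (fun v => G.Adj u v)) \ C
        = T.filter (fun v => v ∉ C ∧ G.Adj u v) := by
      ext v; simp only [Finset.mem_sdiff, Finset.mem_filter]; tauto
    rw [this, Finset.sum_filter]
    rw [Finset.mul_sum]
    refine Finset.sum_congr rfl fun v _ => ?_
    by_cases h1 : v ∉ C <;> by_cases h3 : G.Adj u v <;> simp [huC, h1, h3] <;> ring
  rw [collapse]
  ring
lemma gain_lb (hconn : G.Connected) (g : ℕ) (o : V) (hgrow : IsGrowing G hlf g o)
    (m i : ℕ) (him : i ≤ m) (Bm : Finset V) (hBm : ∀ v, v ∈ Bm ↔ G.dist o v ≤ m)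
    (F1 : Finset V) (hF1 : F1 = Bm.filter (fun v => i + 1 ≤ G.dist o v))
    (x : V) (hx : G.dist o x = i)
    (σ : V → Bool) (hσx : σ x = true)
    (htop : ∀ v, G.dist o v = m + 1 → σ v = true)
    (C : Finset V) (hCF : C ⊆ F1)
    (hminus : ∀ u ∈ C, σ u = false)
    (hmax : ∀ u ∈ C, ∀ v ∈ F1, G.Adj u v → v ∉ C → σ v = true) :
    (g : ℝ) * C.card + 2 * ((C.filter (fun u => G.Adj u x)).card : ℝ)
      ≤ ∑ u ∈ C, ∑ v ∈ ((cl G hlf F1).filter (fun v => G.Adj u v)) \ C, spin (σ v) := by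
  classical
  have hxF : x ∉ F1 := by
    rw [hF1]; simp only [Finset.mem_filter, hx, not_and]; intro _; omega
  -- abbreviations
  set fUp : V → Finset V := fun u => (nbr G hlf u).filter (fun v => G.dist o v = G.dist o u + 1)
    with hfUp
  set fDown : V → Finset V := fun u => (nbr G hlf u).filter (fun v => G.dist o v ≤ G.dist o u)
    with hfDown
  -- per-vertex bound
  have per_u : ∀ u ∈ C,
      (((fUp u).card : ℝ) - (((fUp u) ∩ C).card : ℝ))
        - (((fDown u).card : ℝ) - (((fDown u) ∩ C).card : ℝ))
        + 2 * (if G.Adj u x then (1:ℝ) else 0)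
      ≤ ∑ v ∈ ((cl G hlf F1).filter (fun v => G.Adj u v)) \ C, spin (σ v) := by
    intro u hu
    have huF : u ∈ F1 := hCF hu
    have hdu : i + 1 ≤ G.dist o u ∧ G.dist o u ≤ m := by
      rw [hF1] at huF
      exact ⟨(Finset.mem_filter.1 huF).2, (hBm u).1 (Finset.mem_filter.1 huF).1⟩
    rw [cl_filter_adj_eq_nbr huF]
    rw [← Finset.sum_filter_add_sum_filter_not ((nbr G hlf u) \ C)
      (fun v => G.dist o v = G.dist o u + 1) (fun v => spin (σ v))]
    have hA : ((nbr G hlf u) \ C).filter (fun v => G.dist o v = G.dist o u + 1)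
        = fUp u \ C := by
      ext v
      simp only [Finset.mem_filter, Finset.mem_sdiff, hfUp]
      tauto
    have hB : ((nbr G hlf u) \ C).filter (fun v => ¬ G.dist o v = G.dist o u + 1)
        = fDown u \ C := by
      ext v
      simp only [Finset.mem_filter, Finset.mem_sdiff, hfDown]
      constructor
      · rintro ⟨⟨hv, hvC⟩, hne⟩
        have := dist_adj_le hconn (mem_nbr.1 hv) (o := o)
        exact ⟨⟨hv, by omega⟩, hvC⟩
      · rintro ⟨⟨hv, hle⟩, hvC⟩
        exact ⟨⟨hv, hvC⟩, by omega⟩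
    rw [hA, hB]
    -- up part
    have hUpPlus : ∀ v ∈ fUp u \ C, σ v = true := by
      intro v hv
      simp only [Finset.mem_sdiff, hfUp, Finset.mem_filter] at hv
      obtain ⟨⟨hvn, hvd⟩, hvC⟩ := hv
      by_cases hvF : v ∈ F1
      · exact hmax u hu v hvF (mem_nbr.1 hvn) hvC
      · have hvB : v ∉ Bm := by
          intro hvB
          exact hvF (by rw [hF1]; exact Finset.mem_filter.2 ⟨hvB, by omega⟩)
        have : ¬ G.dist o v ≤ m := fun h => hvB ((hBm v).2 h)
        exact htop v (by omega)
    have hUpSum : ∑ v ∈ fUp u \ C, spin (σ v) = ((fUp u \ C).card : ℝ) := by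
      have hone : ∀ v ∈ fUp u \ C, spin (σ v) = 1 := by
        intro v hv; rw [hUpPlus v hv]; rfl
      rw [Finset.sum_congr rfl hone]
      simp
    have hcardUp : ((fUp u \ C).card : ℝ) = ((fUp u).card : ℝ) - (((fUp u) ∩ C).card : ℝ) := by
      have := Finset.card_sdiff_add_card_inter (fUp u) C
      have h2 : (fUp u \ C).card + (fUp u ∩ C).card = (fUp u).card := this
      push_cast [← h2]
      ring
    have hcardDown : ((fDown u \ C).card : ℝ)
        = ((fDown u).card : ℝ) - (((fDown u) ∩ C).card : ℝ) := by
      have h2 : (fDown u \ C).card + (fDown u ∩ C).card = (fDown u).card :=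
        Finset.card_sdiff_add_card_inter (fDown u) C
      push_cast [← h2]
      ring
    -- down part
    have hDownSum : -(((fDown u \ C).card : ℝ)) + 2 * (if G.Adj u x then (1:ℝ) else 0)
        ≤ ∑ v ∈ fDown u \ C, spin (σ v) := by
      by_cases hadj : G.Adj u x
      · have hxmem : x ∈ fDown u \ C := by
          simp only [Finset.mem_sdiff, hfDown, Finset.mem_filter, mem_nbr]
          refine ⟨⟨hadj, by omega⟩, fun hxC => hxF (hCF hxC)⟩
        rw [← Finset.sum_erase_add _ _ hxmem]
        have h1 : -(((fDown u \ C).erase x).card : ℝ)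
            ≤ ∑ v ∈ (fDown u \ C).erase x, spin (σ v) := by
          have := Finset.card_nsmul_le_sum ((fDown u \ C).erase x) (fun v => spin (σ v)) (-1)
            (fun v _ => neg_one_le_spin _)
          simpa [nsmul_eq_mul, mul_comm] using this
        have h2 : (((fDown u \ C).erase x).card : ℝ) = ((fDown u \ C).card : ℝ) - 1 := by
          rw [Finset.card_erase_of_mem hxmem]
          have : 1 ≤ (fDown u \ C).card := Finset.card_pos.2 ⟨x, hxmem⟩
          push_cast [Nat.cast_sub this]
          ring
        rw [hσx]
        simp only [hadj, if_true]
        have : spin true = 1 := rfl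
        rw [this]
        rw [h2] at h1
        linarith
      · simp only [hadj, if_false, mul_zero, add_zero]
        have := Finset.card_nsmul_le_sum (fDown u \ C) (fun v => spin (σ v)) (-1)
          (fun v _ => neg_one_le_spin _)
        simpa [nsmul_eq_mul, mul_comm] using this
    rw [hUpSum, hcardUp]
    rw [← hcardDown]
    linarith
  -- growing bound, cast to ℝ
  have hgrow' : ∀ u ∈ C, ((fDown u).card : ℝ) + (g : ℝ) ≤ ((fUp u).card : ℝ) := by
    intro u _
    exact_mod_cast Nat.cast_le.2 (hgrow u)
  -- swap counting
  have swapcount : ∑ u ∈ C, ((fUp u) ∩ C).card ≤ ∑ u ∈ C, ((fDown u) ∩ C).card := by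
    have e1 : ∀ u : V, (fUp u ∩ C).card
        = (C.filter (fun v => G.Adj u v ∧ G.dist o v = G.dist o u + 1)).card := by
      intro u
      congr 1
      ext v
      simp only [Finset.mem_inter, hfUp, Finset.mem_filter, mem_nbr]
      tauto
    have e2 : ∀ u : V, (fDown u ∩ C).card
        = (C.filter (fun v => G.Adj u v ∧ G.dist o v ≤ G.dist o u)).card := by
      intro u
      congr 1
      ext v
      simp only [Finset.mem_inter, hfDown, Finset.mem_filter, mem_nbr]
      tauto
    have k1 : ∑ u ∈ C, (C.filter (fun v => G.Adj u v ∧ G.dist o v = G.dist o u + 1)).card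
        = ((C ×ˢ C).filter (fun pr : V × V =>
            G.Adj pr.1 pr.2 ∧ G.dist o pr.2 = G.dist o pr.1 + 1)).card := by
      rw [Finset.card_filter, Finset.sum_product]
      refine Finset.sum_congr rfl fun u _ => ?_
      rw [Finset.card_filter]
    have k2 : ∑ u ∈ C, (C.filter (fun v => G.Adj u v ∧ G.dist o v ≤ G.dist o u)).card
        = ((C ×ˢ C).filter (fun pr : V × V =>
            G.Adj pr.1 pr.2 ∧ G.dist o pr.2 ≤ G.dist o pr.1)).card := by
      rw [Finset.card_filter, Finset.sum_product]
      refine Finset.sum_congr rfl fun u _ => ?_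
      rw [Finset.card_filter]
    simp only [e1, e2]
    rw [k1, k2]
    apply Finset.card_le_card_of_injOn (fun pr => (pr.2, pr.1))
    · intro pr hpr
      simp only [Finset.mem_coe, Finset.mem_filter, Finset.mem_product] at hpr ⊢
      obtain ⟨⟨h1, h2⟩, h3, h4⟩ := hpr
      exact ⟨⟨h2, h1⟩, h3.symm, by omega⟩
    · intro a _ b _ h
      simpa [Prod.ext_iff, and_comm] using h
  -- count of adjacency
  have hadjcount : ∑ u ∈ C, 2 * (if G.Adj u x then (1:ℝ) else 0)
      = 2 * ((C.filter (fun u => G.Adj u x)).card : ℝ) := by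
    rw [← Finset.mul_sum]
    congr 1
    rw [Finset.card_filter]
    push_cast
    rfl
  -- sum everything
  have total := Finset.sum_le_sum per_u
  have lower : (g : ℝ) * C.card + 2 * ((C.filter (fun u => G.Adj u x)).card : ℝ)
      ≤ ∑ u ∈ C, ((((fUp u).card : ℝ) - (((fUp u) ∩ C).card : ℝ))
        - (((fDown u).card : ℝ) - (((fDown u) ∩ C).card : ℝ))
        + 2 * (if G.Adj u x then (1:ℝ) else 0)) := by
    rw [Finset.sum_add_distrib, hadjcount]
    have h1 : (g : ℝ) * C.card ≤ ∑ u ∈ C, ((((fUp u).card : ℝ) - (((fUp u) ∩ C).card : ℝ))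
        - (((fDown u).card : ℝ) - (((fDown u) ∩ C).card : ℝ))) := by
      have expand : ∑ u ∈ C, ((((fUp u).card : ℝ) - (((fUp u) ∩ C).card : ℝ))
          - (((fDown u).card : ℝ) - (((fDown u) ∩ C).card : ℝ)))
          = (∑ u ∈ C, (((fUp u).card : ℝ) - ((fDown u).card : ℝ)))
            + ((∑ u ∈ C, (((fDown u) ∩ C).card : ℝ)) - ∑ u ∈ C, (((fUp u) ∩ C).card : ℝ)) := by
        simp only [Finset.sum_sub_distrib]
        ring
      rw [expand]
      have hsw : (0:ℝ) ≤ (∑ u ∈ C, (((fDown u) ∩ C).card : ℝ))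
          - ∑ u ∈ C, (((fUp u) ∩ C).card : ℝ) := by
        have := swapcount
        have : ((∑ u ∈ C, ((fUp u) ∩ C).card : ℕ) : ℝ)
            ≤ ((∑ u ∈ C, ((fDown u) ∩ C).card : ℕ) : ℝ) := by exact_mod_cast this
        push_cast at this
        linarith
      have hg1 : (g : ℝ) * C.card ≤ ∑ u ∈ C, (((fUp u).card : ℝ) - ((fDown u).card : ℝ)) := by
        have : ∀ u ∈ C, (g : ℝ) ≤ (((fUp u).card : ℝ) - ((fDown u).card : ℝ)) := by
          intro u hu
          have := hgrow' u hu
          linarith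
        have h := Finset.card_nsmul_le_sum C
          (fun u => (((fUp u).card : ℝ) - ((fDown u).card : ℝ))) (g : ℝ) this
        simpa [nsmul_eq_mul, mul_comm] using h
      linarith
    linarith
  linarith
/-- Finset of "walk lists" of length `n+1` ending (getLast) at `x`. -/
def wlk (G : SimpleGraph V) (hlf : G.LocallyFinite) (x : V) : ℕ → Finset (List V)
  | 0 => {[x]}
  | (n+1) => (wlk G hlf x n).biUnion
      (fun l => l.head?.elim ∅ (fun a => (nbr G hlf a).image (fun v => v :: l)))

variable {G : SimpleGraph V} {hlf : G.LocallyFinite}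

lemma mem_wlk {x : V} : ∀ {n : ℕ} {l : List V},
    l ∈ wlk G hlf x n ↔ l.length = n + 1 ∧ l.IsChain G.Adj ∧ l.getLast? = some x := by
  intro n
  induction n with
  | zero =>
    intro l
    simp only [wlk, Finset.mem_singleton]
    constructor
    · rintro rfl; exact ⟨rfl, List.isChain_singleton _, rfl⟩
    · rintro ⟨h1, _, h3⟩
      obtain ⟨a, rfl⟩ := List.length_eq_one_iff.1 h1
      have : a = x := by simpa using h3
      rw [this]
  | succ n ih =>
    intro l
    simp only [wlk, Finset.mem_biUnion]
    constructor
    · rintro ⟨l', hl', hmem⟩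
      obtain ⟨hlen, hch, hlast⟩ := ih.1 hl'
      have hne : l' ≠ [] := by intro h; rw [h] at hlen; simp at hlen
      obtain ⟨a, t, rfl⟩ := List.exists_cons_of_ne_nil hne
      simp only [List.head?_cons, Option.elim_some, Finset.mem_image] at hmem
      obtain ⟨v, hv, rfl⟩ := hmem
      refine ⟨by simpa using hlen, ?_, ?_⟩
      · rw [List.isChain_cons_cons]
        exact ⟨(mem_nbr.1 hv).symm, hch⟩
      · rw [List.getLast?_cons_cons]
        exact hlast
    · rintro ⟨hlen, hch, hlast⟩
      cases l with
      | nil => simp at hlen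
      | cons v l' =>
        have hne : l' ≠ [] := by
          intro h; rw [h] at hlen; simp at hlen
        obtain ⟨a, t, rfl⟩ := List.exists_cons_of_ne_nil hne
        rw [List.isChain_cons_cons] at hch
        refine ⟨a :: t, ih.2 ⟨by simpa using hlen, hch.2, ?_⟩, ?_⟩
        · rw [List.getLast?_cons_cons] at hlast; exact hlast
        · simp only [List.head?_cons, Option.elim_some, Finset.mem_image]
          exact ⟨v, mem_nbr.2 hch.1.symm, rfl⟩

lemma wlk_card {x : V} {Δ : ℕ} (hΔ : ∀ v : V, (nbr G hlf v).card ≤ Δ) :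
    ∀ n : ℕ, (wlk G hlf x n).card ≤ Δ ^ n := by
  intro n
  induction n with
  | zero => simp [wlk]
  | succ n ih =>
    calc (wlk G hlf x (n+1)).card
        ≤ ∑ l ∈ wlk G hlf x n,
            (l.head?.elim (∅ : Finset (List V)) (fun a => (nbr G hlf a).image (fun v => v :: l))).card :=
          Finset.card_biUnion_le
      _ ≤ ∑ l ∈ wlk G hlf x n, Δ := by
          refine Finset.sum_le_sum fun l _ => ?_
          cases l with
          | nil => simp
          | cons a t =>
            simp only [List.head?_cons, Option.elim_some]
            exact le_trans (Finset.card_image_le) (hΔ _)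
      _ = (wlk G hlf x n).card * Δ := by rw [Finset.sum_const, smul_eq_mul]
      _ ≤ Δ ^ n * Δ := Nat.mul_le_mul_right _ ih
      _ = Δ ^ (n+1) := by ring

lemma wlk_decomp {x : V} {n : ℕ} {l : List V} (hl : l ∈ wlk G hlf x n)
    (s l' : List V) (hsplit : l = s ++ l') (hne : l' ≠ []) :
    l' ∈ wlk G hlf x (l'.length - 1) ∧ l'.length - 1 + s.length = n := by
  obtain ⟨hlen, hch, hlast⟩ := mem_wlk.1 hl
  have h1 : 1 ≤ l'.length := by
    cases l' with
    | nil => exact absurd rfl hne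
    | cons a t => simp
  constructor
  · refine mem_wlk.2 ⟨by omega, hch.suffix ⟨s, hsplit.symm⟩, ?_⟩
    rw [hsplit, List.getLast?_append_of_ne_nil _ hne] at hlast
    exact hlast
  · rw [hsplit] at hlen
    simp only [List.length_append] at hlen
    omega

/-- there is an exploration walk covering a connected set -/
lemma wlk_cover (x : V) (S : Finset V) (hx : x ∈ S)
    (hS : ∀ v ∈ S, ∃ n, ∃ l ∈ wlk G hlf x n, l.head? = some v ∧ ∀ u ∈ l, u ∈ S) :
    ∃ l ∈ wlk G hlf x (2 * (S.card - 1)), l.toFinset = S := by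
  classical
  suffices H : ∀ N : ℕ, ∀ S : Finset V, S.card = N → x ∈ S →
      (∀ v ∈ S, ∃ n, ∃ l ∈ wlk G hlf x n, l.head? = some v ∧ ∀ u ∈ l, u ∈ S) →
      ∃ l ∈ wlk G hlf x (2 * (S.card - 1)), l.toFinset = S by
    exact H S.card S rfl hx hS
  intro N
  induction N using Nat.strong_induction_on with
  | _ N IH =>
    intro S hcard hxS hSr
    have hxwlk : [x] ∈ wlk G hlf x 0 := by simp [wlk]
    by_cases hS1 : S.card = 1
    · obtain ⟨a, ha⟩ := Finset.card_eq_one.1 hS1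
      have hax : x = a := by rw [ha] at hxS; simpa using hxS
      refine ⟨[x], by simpa [hS1] using hxwlk, by simp [ha, hax]⟩
    · -- S.card ≥ 2
      have hcard2 : 2 ≤ S.card := by
        have : 1 ≤ S.card := Finset.card_pos.2 ⟨x, hxS⟩
        omega
      set P : ℕ → V → Prop := fun n v =>
        ∃ l ∈ wlk G hlf x n, l.head? = some v ∧ ∀ u ∈ l, u ∈ S with hP
      have hex : ∀ v ∈ S, ∃ n, P n v := hSr
      set d : V → ℕ := fun v => if h : ∃ n, P n v then Nat.find h else 0 with hd
      have hdspec : ∀ v ∈ S, P (d v) v := by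
        intro v hv
        have h := hex v hv
        simp only [hd, dif_pos h]
        exact Nat.find_spec h
      have hdmin : ∀ v ∈ S, ∀ k, P k v → d v ≤ k := by
        intro v hv k hk
        have h := hex v hv
        simp only [hd, dif_pos h]
        exact Nat.find_min' h hk
      have hd0 : ∀ v ∈ S, d v = 0 → v = x := by
        intro v hv h0
        obtain ⟨l, hl, hhead, _⟩ := h0 ▸ hdspec v hv
        obtain ⟨h1, _, h3⟩ := mem_wlk.1 hl
        obtain ⟨a, rfl⟩ := List.length_eq_one_iff.1 h1
        have hax : a = x := by simpa using h3
        have hav : a = v := by simpa using hhead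
        rw [← hav, hax]
      have hdx : d x = 0 := by
        have hp0 : P 0 x := ⟨[x], hxwlk, rfl, fun u hu => by
          simp only [List.mem_singleton] at hu; rw [hu]; exact hxS⟩
        have := hdmin x hxS 0 hp0
        omega
      obtain ⟨y, hyS, hymax⟩ := S.exists_max_image d ⟨x, hxS⟩
      obtain ⟨v₀, hv₀S, hv₀x⟩ := Finset.exists_mem_ne (s := S) (by omega) x
      have hdy1 : 1 ≤ d y := by
        by_contra h
        have h0 : d y = 0 := by omega
        have hv₀0 : d v₀ = 0 := by have := hymax v₀ hv₀S; omega
        exact hv₀x (hd0 v₀ hv₀S hv₀0)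
      have hyx : y ≠ x := fun h => by rw [h, hdx] at hdy1; omega
      -- minimal witnesses avoid y
      have havoid : ∀ v ∈ S, v ≠ y → ∃ l ∈ wlk G hlf x (d v),
          l.head? = some v ∧ ∀ u ∈ l, u ∈ S ∧ u ≠ y := by
        intro v hv hvy
        obtain ⟨l, hl, hhead, hmem⟩ := hdspec v hv
        refine ⟨l, hl, hhead, fun u hu => ⟨hmem u hu, ?_⟩⟩
        rintro rfl
        obtain ⟨s, t, hst⟩ := List.append_of_mem hu
        obtain ⟨hsuf, hlen⟩ := wlk_decomp hl s (u :: t) hst (by simp)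
        have hPy : P ((u :: t).length - 1) u := by
          refine ⟨u :: t, hsuf, rfl, fun w hw => hmem w ?_⟩
          rw [hst]; exact List.mem_append_right s hw
        have hdy_le := hdmin u hyS _ hPy
        cases s with
        | nil =>
          rw [hst] at hhead
          simp only [List.nil_append, List.head?_cons, Option.some.injEq] at hhead
          exact hvy hhead.symm
        | cons a s' =>
          have hlt : (u :: t).length - 1 < d v := by
            simp only [List.length_cons] at hlen ⊢
            omega
          have := hymax v hv
          omega
      -- take minimal witness of y, extract neighbour z
      obtain ⟨ly, hly, hlyhead, hlymem⟩ := hdspec y hyS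
      obtain ⟨hlylen, hlych, hlylast⟩ := mem_wlk.1 hly
      obtain ⟨z, t, hzy⟩ : ∃ z t, ly = y :: z :: t := by
        cases ly with
        | nil => simp at hlylen
        | cons a l1 =>
          have hay : a = y := by simpa using hlyhead
          cases l1 with
          | nil =>
            simp only [List.length_cons, List.length_nil] at hlylen
            omega
          | cons b l2 => exact ⟨b, l2, by rw [hay]⟩
      have hadjyz : G.Adj y z := by
        rw [hzy] at hlych
        exact (List.isChain_cons_cons.1 hlych).1
      have hzS : z ∈ S := hlymem z (by rw [hzy]; simp)
      have hzy' : z ≠ y := by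
        intro heq
        obtain ⟨hsuf, hlen⟩ := wlk_decomp hly [y] (z :: t) (by rw [hzy]; rfl) (by simp)
        have hPz : P ((z :: t).length - 1) y := by
          rw [← heq]
          exact ⟨z :: t, hsuf, rfl, fun w hw => hlymem w (by rw [hzy]; exact List.mem_cons_of_mem y hw)⟩
        have := hdmin y hyS _ hPz
        simp only [List.length_cons, List.length_singleton] at hlen this
        omega
      -- induct on S.erase y
      set S' := S.erase y with hS'
      have hxS' : x ∈ S' := Finset.mem_erase.2 ⟨fun h => hyx h.symm, hxS⟩
      have hcard' : S'.card = N - 1 := by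
        rw [hS', Finset.card_erase_of_mem hyS, hcard]
      have hS'r : ∀ v ∈ S', ∃ n, ∃ l ∈ wlk G hlf x n, l.head? = some v ∧ ∀ u ∈ l, u ∈ S' := by
        intro v hv
        obtain ⟨hvny, hvS⟩ := Finset.mem_erase.1 hv
        obtain ⟨l, hl, hh, hm⟩ := havoid v hvS hvny
        exact ⟨d v, l, hl, hh, fun u hu => Finset.mem_erase.2 ⟨(hm u hu).2, (hm u hu).1⟩⟩
      obtain ⟨L, hL, hLto⟩ := IH (N - 1) (by omega) S' hcard' hxS' hS'r
      have hzS' : z ∈ S' := Finset.mem_erase.2 ⟨hzy', hzS⟩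
      have hzL : z ∈ L := by rw [← List.mem_toFinset, hLto]; exact hzS'
      obtain ⟨s, t', hLst⟩ := List.append_of_mem hzL
      set L' : List V := s ++ z :: y :: z :: t' with hL'
      obtain ⟨hLlen, hLch, hLlast⟩ := mem_wlk.1 hL
      have hL'len : L'.length = L.length + 2 := by
        rw [hL', hLst]; simp; omega
      have hL'ch : L'.IsChain G.Adj := by
        rw [hLst] at hLch
        rw [List.isChain_split] at hLch
        rw [hL']
        rw [List.isChain_split]
        refine ⟨hLch.1, ?_⟩
        rw [show (y :: z :: t' : List V) = y :: z :: t' from rfl]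
        rw [List.isChain_cons_cons, List.isChain_cons_cons]
        exact ⟨hadjyz.symm, hadjyz, hLch.2⟩
      have hL'last : L'.getLast? = some x := by
        have h1 : L'.getLast? = (z :: t').getLast? := by
          rw [hL']
          have he : s ++ z :: y :: z :: t' = (s ++ [z, y]) ++ (z :: t') := by simp
          rw [he, List.getLast?_append_of_ne_nil _ (by simp)]
        have h2 : L.getLast? = (z :: t').getLast? := by
          rw [hLst, List.getLast?_append_of_ne_nil _ (by simp)]
        rw [h1, ← h2, hLlast]
      have hL'mem : L' ∈ wlk G hlf x (2 * (S.card - 1)) := by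
        refine mem_wlk.2 ⟨?_, hL'ch, hL'last⟩
        rw [hL'len, hLlen, hcard', hcard]
        omega
      refine ⟨L', hL'mem, ?_⟩
      have hto : L'.toFinset = insert y L.toFinset := by
        rw [hL', hLst]
        ext a
        simp only [List.toFinset_append, List.toFinset_cons, Finset.mem_union, Finset.mem_insert,
          List.mem_toFinset]
        tauto
      rw [hto, hLto, hS', Finset.insert_erase hyS]

/-- connectivity to `x` through the set -/
def connX (G : SimpleGraph V) (hlf : G.LocallyFinite) [DecidableEq V] (x : V)
    (C : Finset V) : Prop :=
  ∀ v ∈ C, ∃ n, ∃ l ∈ wlk G hlf x n, l.head? = some v ∧ ∀ u ∈ l, u ∈ insert x C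

lemma conn_count (x : V) (F1 : Finset V) (hxF : x ∉ F1) {Δ : ℕ}
    (hΔ : ∀ v : V, (nbr G hlf v).card ≤ Δ) (k : ℕ) :
    ((F1.powerset.filter (fun C => C.Nonempty ∧ connX G hlf x C)).filter
      (fun C => C.card = k)).card ≤ Δ ^ (2 * k) := by
  classical
  have hxwlk : [x] ∈ wlk G hlf x 0 := by simp [wlk]
  have hcov : ∀ C ∈ (F1.powerset.filter (fun C => C.Nonempty ∧ connX G hlf x C)).filter
      (fun C => C.card = k),
      ∃ l ∈ wlk G hlf x (2 * k), l.toFinset = insert x C := by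
    intro C hC
    simp only [Finset.mem_filter, Finset.mem_powerset] at hC
    obtain ⟨⟨hCF, _, hconnX⟩, hk⟩ := hC
    have hxC : x ∉ C := fun h => hxF (hCF h)
    have hcard : (insert x C).card = k + 1 := by
      rw [Finset.card_insert_of_notMem hxC, hk]
    have := wlk_cover (G := G) (hlf := hlf) x (insert x C) (Finset.mem_insert_self x C) ?_
    · rw [hcard] at this
      simpa using this
    · intro v hv
      rcases Finset.mem_insert.1 hv with hvx | hvC
      · subst hvx
        exact ⟨0, [v], hxwlk, rfl, fun u hu => by
          simp only [List.mem_singleton] at hu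
          rw [hu]; exact Finset.mem_insert_self v C⟩
      · exact hconnX v hvC
  set f : Finset V → List V := fun C =>
    if h : ∃ l ∈ wlk G hlf x (2 * k), l.toFinset = insert x C then h.choose else [] with hf
  have hfspec : ∀ C ∈ (F1.powerset.filter (fun C => C.Nonempty ∧ connX G hlf x C)).filter
      (fun C => C.card = k), f C ∈ wlk G hlf x (2 * k) ∧ (f C).toFinset = insert x C := by
    intro C hC
    have h := hcov C hC
    simp only [hf, dif_pos h]
    obtain ⟨h1, h2⟩ := h.choose_spec
    exact ⟨h1, h2⟩
  refine le_trans (Finset.card_le_card_of_injOn f (fun C hC => (hfspec C hC).1) ?_)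
    (wlk_card hΔ (2 * k))
  intro C₁ h₁ C₂ h₂ heq
  rw [Finset.mem_coe] at h₁ h₂
  have e1 := (hfspec C₁ h₁).2
  have e2 := (hfspec C₂ h₂).2
  rw [heq, e2] at e1
  have hx1 : x ∉ C₁ := fun h => hxF ((Finset.mem_powerset.1 (Finset.mem_filter.1
      (Finset.mem_filter.1 h₁).1).1) h)
  have hx2 : x ∉ C₂ := fun h => hxF ((Finset.mem_powerset.1 (Finset.mem_filter.1
      (Finset.mem_filter.1 h₂).1).1) h)
  have : (insert x C₂).erase x = (insert x C₁).erase x := by rw [e1]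
  rw [Finset.erase_insert hx2, Finset.erase_insert hx1] at this
  exact this.symm

lemma geom_half_le_two (N : ℕ) : ∑ k ∈ Finset.range N, ((1:ℝ)/2)^k ≤ 2 := by
  induction N with
  | zero => norm_num
  | succ n ih =>
    have heq : ∀ M : ℕ, ∑ k ∈ Finset.range M, ((1:ℝ)/2)^k = 2 - 2 * (1/2)^M := by
      intro M
      induction M with
      | zero => simp
      | succ m ihm =>
        rw [Finset.sum_range_succ, ihm, pow_succ]
        ring
    rw [heq]
    have : (0:ℝ) ≤ (1/2)^(n+1) := by positivity
    linarith

lemma cluster_sum_bound (x : V) (F1 : Finset V) (hxF : x ∉ F1) {Δ g : ℕ}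
    (hΔ : ∀ v : V, (nbr G hlf v).card ≤ Δ) (hg : 1 ≤ g) {β : ℝ}
    (hβ : ((Δ:ℝ)^2 + 1) ≤ β) :
    ∑ C ∈ F1.powerset.filter (fun C => C.Nonempty ∧ connX G hlf x C),
      Real.exp (-(2*(g:ℝ)*β) * C.card)
    ≤ 2 * (Δ:ℝ)^2 * Real.exp (-(2*(g:ℝ)*β)) := by
  classical
  have hβpos : 0 < β := by nlinarith [sq_nonneg (Δ:ℝ)]
  set 𝒞 := F1.powerset.filter (fun C => C.Nonempty ∧ connX G hlf x C) with h𝒞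
  set a : ℝ := (Δ:ℝ)^2 * Real.exp (-(2*(g:ℝ)*β)) with ha
  have ha_nonneg : 0 ≤ a := by positivity
  have ha_half : a ≤ 1/2 := by
    have h1 : Real.exp (-(2*(g:ℝ)*β)) ≤ Real.exp (-(2*β)) := by
      apply Real.exp_le_exp.2
      have hg1 : (1:ℝ) ≤ (g:ℝ) := by exact_mod_cast hg
      nlinarith
    have h2 : (2*β + 1) ≤ Real.exp (2*β) := by
      have := Real.add_one_le_exp (2*β); linarith
    have h4 : 2 * (Δ:ℝ)^2 ≤ Real.exp (2*β) := by nlinarith [sq_nonneg (Δ:ℝ)]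
    have h3 : Real.exp (-(2*β)) = 1 / Real.exp (2*β) := by
      rw [Real.exp_neg]; ring
    calc a ≤ (Δ:ℝ)^2 * Real.exp (-(2*β)) := by
          rw [ha]; exact mul_le_mul_of_nonneg_left h1 (by positivity)
      _ ≤ 1/2 := by
          rw [h3, mul_one_div, div_le_iff₀ (Real.exp_pos _)]
          linarith
  have hmaps : ∀ C ∈ 𝒞, C.card ∈ Finset.Icc 1 F1.card := by
    intro C hC
    simp only [h𝒞, Finset.mem_filter, Finset.mem_powerset] at hC
    exact Finset.mem_Icc.2 ⟨Finset.card_pos.2 hC.2.1, Finset.card_le_card hC.1⟩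
  rw [← Finset.sum_fiberwise_of_maps_to hmaps (fun C => Real.exp (-(2*(g:ℝ)*β) * C.card))]
  have inner_bound : ∀ k ∈ Finset.Icc 1 F1.card,
      ∑ C ∈ 𝒞.filter (fun C => C.card = k), Real.exp (-(2*(g:ℝ)*β) * C.card)
        ≤ a * (1/2)^(k-1) := by
    intro k hk
    obtain ⟨hk1, hk2⟩ := Finset.mem_Icc.1 hk
    have heq : ∀ C ∈ 𝒞.filter (fun C => C.card = k),
        Real.exp (-(2*(g:ℝ)*β) * C.card) = Real.exp (-(2*(g:ℝ)*β)) ^ k := by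
      intro C hC
      have hCk : (C.card : ℝ) = (k : ℝ) := by
        have := (Finset.mem_filter.1 hC).2
        exact_mod_cast this
      rw [hCk, mul_comm, ← Real.exp_nat_mul]
    rw [Finset.sum_congr rfl heq, Finset.sum_const, nsmul_eq_mul]
    have hcount := conn_count x F1 hxF hΔ k
    have step1 : ((𝒞.filter (fun C => C.card = k)).card : ℝ) * Real.exp (-(2*(g:ℝ)*β)) ^ k
        ≤ ((Δ:ℝ)^(2*k)) * Real.exp (-(2*(g:ℝ)*β)) ^ k := by
      apply mul_le_mul_of_nonneg_right _ (by positivity)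
      exact_mod_cast hcount
    have step2 : ((Δ:ℝ)^(2*k)) * Real.exp (-(2*(g:ℝ)*β)) ^ k = a ^ k := by
      rw [ha, mul_pow, pow_mul]
    have step3 : a ^ k ≤ a * (1/2)^(k-1) := by
      have hsplit : a ^ k = a * a^(k-1) := by
        rw [← pow_succ']
        congr 1
        omega
      rw [hsplit]
      refine mul_le_mul_of_nonneg_left ?_ ha_nonneg
      exact pow_le_pow_left₀ ha_nonneg ha_half (k-1)
    linarith
  calc ∑ k ∈ Finset.Icc 1 F1.card, ∑ C ∈ 𝒞.filter (fun C => C.card = k),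
        Real.exp (-(2*(g:ℝ)*β) * C.card)
      ≤ ∑ k ∈ Finset.Icc 1 F1.card, a * (1/2)^(k-1) := Finset.sum_le_sum inner_bound
    _ = a * ∑ k ∈ Finset.Icc 1 F1.card, ((1:ℝ)/2)^(k-1) := by rw [← Finset.mul_sum]
    _ ≤ a * 2 := by
        refine mul_le_mul_of_nonneg_left ?_ ha_nonneg
        have hbij : ∑ k ∈ Finset.Icc 1 F1.card, ((1:ℝ)/2)^(k-1)
            = ∑ j ∈ Finset.range F1.card, ((1:ℝ)/2)^j := by
          refine Finset.sum_nbij' (fun k => k - 1) (fun j => j + 1) ?_ ?_ ?_ ?_ ?_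
          · intro k hk
            simp only [Finset.mem_Icc] at hk
            simp only [Finset.mem_range]
            omega
          · intro j hj
            simp only [Finset.mem_range] at hj
            simp only [Finset.mem_Icc]
            omega
          · intro k hk
            simp only [Finset.mem_Icc] at hk
            show k - 1 + 1 = k
            omega
          · intro j _
            show j + 1 - 1 = j
            omega
          · intro k _
            rfl
        rw [hbij]
        exact geom_half_le_two _
    _ = 2 * (Δ:ℝ)^2 * Real.exp (-(2*(g:ℝ)*β)) := by rw [ha]; ring
/-- The main Peierls estimate. -/
lemma peierls_main (hconn : G.Connected) (g Δ : ℕ) (hg : 1 ≤ g) (o : V)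
    (hgrow : IsGrowing G hlf g o) (hΔ : ∀ v : V, (nbr G hlf v).card ≤ Δ)
    (m i : ℕ) (him : i ≤ m) (Bm : Finset V) (hBm : ∀ v, v ∈ Bm ↔ G.dist o v ≤ m)
    (F1 : Finset V) (hF1 : F1 = Bm.filter (fun v => i + 1 ≤ G.dist o v))
    (x : V) (hx : G.dist o x = i)
    (τ : V → Bool) (hτ : ∀ v : V, G.dist o v = m + 1 → τ v = true)
    (β : ℝ) (hβ : ((Δ:ℝ)^2 + 1) ≤ β) :
    ∑ p ∈ F1.pi (fun _ => (Finset.univ : Finset Bool)),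
      Real.exp (4*β*(((F1.filter (fun v => G.Adj x v)).filter
          (fun v => patch F1 (Function.update τ x true) p v = false)).card : ℝ))
        * Real.exp (β * energyB G hlf F1 (patch F1 (Function.update τ x true) p))
    ≤ (1 + 2*(Δ:ℝ)^2 * Real.exp (-(2*(g:ℝ)*β)))
       * ∑ p ∈ F1.pi (fun _ => (Finset.univ : Finset Bool)),
           Real.exp (β * energyB G hlf F1 (patch F1 (Function.update τ x true) p)) := by
  classical
  have hβpos : 0 < β := by nlinarith [sq_nonneg (Δ:ℝ)]
  have hxF : x ∉ F1 := by
    rw [hF1]; simp only [Finset.mem_filter, hx, not_and]; intro _; omega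
  set ηp : V → Bool := Function.update τ x true with hηp
  set E : (V → Bool) → ℝ := energyB G hlf F1 with hE
  set P : Finset (∀ a ∈ F1, Bool) := F1.pi (fun _ => (Finset.univ : Finset Bool)) with hPdef
  set cp : (∀ a ∈ F1, Bool) → V → Bool := fun p => patch F1 ηp p with hcp
  set M : (∀ a ∈ F1, Bool) → ℕ := fun p =>
    ((F1.filter (fun v => G.Adj x v)).filter (fun v => cp p v = false)).card with hM
  set w : (∀ a ∈ F1, Bool) → ℝ := fun p => Real.exp (β * E (cp p)) with hw
  have hwpos : ∀ p, 0 < w p := fun p => Real.exp_pos _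
  -- basic facts about cp
  have hcp_mem : ∀ p (v : V) (hv : v ∈ F1), cp p v = p v hv := by
    intro p v hv; simp [hcp, patch, hv]
  have hcp_x : ∀ p, cp p x = true := by
    intro p; simp [hcp, patch, hxF, hηp]
  have hcp_top : ∀ p v, G.dist o v = m + 1 → cp p v = true := by
    intro p v hv
    have hvBm : v ∉ Bm := by
      intro h; have := (hBm v).1 h; omega
    have hvF : v ∉ F1 := by rw [hF1]; simp [hvBm]
    have hvx : v ≠ x := by intro h; rw [h, hx] at hv; omega
    simp [hcp, patch, hvF, hηp, Function.update_of_ne hvx, hτ v hv]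
  -- the minus-cluster of p
  set Cp : (∀ a ∈ F1, Bool) → Finset V := fun p =>
    F1.filter (fun v => cp p v = false ∧ ∃ n, ∃ l ∈ wlk G hlf x n, l.head? = some v ∧
      ∀ u ∈ l.dropLast, u ∈ F1 ∧ cp p u = false) with hCp
  have hCpF : ∀ p, Cp p ⊆ F1 := fun p => Finset.filter_subset _ _
  have hCp_minus : ∀ p, ∀ u ∈ Cp p, cp p u = false := by
    intro p u hu; exact ((Finset.mem_filter.1 hu).2).1
  -- minus neighbours of x are in Cp
  have hD_sub : ∀ p, ∀ v, v ∈ F1 → G.Adj x v → cp p v = false → v ∈ Cp p := by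
    intro p v hvF hadj hm
    refine Finset.mem_filter.2 ⟨hvF, hm, 1, [v, x], ?_, rfl, ?_⟩
    · refine mem_wlk.2 ⟨rfl, ?_, rfl⟩
      simp [List.isChain_cons_cons, List.isChain_singleton, hadj.symm]
    · intro u hu
      simp only [List.dropLast_cons₂, List.dropLast_singleton, List.mem_singleton] at hu
      rw [hu]; exact ⟨hvF, hm⟩
  -- maximality
  have hCp_max : ∀ p, ∀ u ∈ Cp p, ∀ v ∈ F1, G.Adj u v → v ∉ Cp p → cp p v = true := by
    intro p u hu v hvF hadj hvC
    by_contra hvt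
    have hm : cp p v = false := by
      cases h : cp p v
      · rfl
      · exact absurd h hvt
    apply hvC
    obtain ⟨_, _, n, l, hl, hhead, hmem⟩ := Finset.mem_filter.1 hu
    obtain ⟨hlen, hch, hlast⟩ := mem_wlk.1 hl
    have hlne : l ≠ [] := by intro h; rw [h] at hlen; simp at hlen
    refine Finset.mem_filter.2 ⟨hvF, hm, n + 1, v :: l, ?_, rfl, ?_⟩
    · refine mem_wlk.2 ⟨by simp [hlen], ?_, ?_⟩
      · rw [List.isChain_cons]
        refine ⟨?_, hch⟩
        intro y hy
        rw [hhead] at hy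
        cases hy
        exact hadj.symm
      · obtain ⟨ys, rfl⟩ := List.getLast?_eq_some_iff.1 hlast
        rw [← List.cons_append, List.getLast?_concat]
    · intro u' hu'
      obtain ⟨a, t, rfl⟩ := List.exists_cons_of_ne_nil hlne
      rw [List.dropLast_cons₂] at hu'
      rcases List.mem_cons.1 hu' with rfl | hu''
      · exact ⟨hvF, hm⟩
      · exact hmem u' hu''
  -- connectivity of Cp
  have hCp_conn : ∀ p, connX G hlf x (Cp p) := by
    intro p v hv
    obtain ⟨hvF, hm, n, l, hl, hhead, hmem⟩ := Finset.mem_filter.1 hv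
    refine ⟨n, l, hl, hhead, ?_⟩
    intro u hu
    obtain ⟨hlen, hch, hlast⟩ := mem_wlk.1 hl
    -- either u = x (the last entry) or u is in dropLast
    have hsplit : l = l.dropLast ++ [x] := by
      obtain ⟨ys, hys⟩ := List.getLast?_eq_some_iff.1 hlast
      rw [hys, List.dropLast_concat]
    by_cases hux : u = x
    · rw [hux]; exact Finset.mem_insert_self x _
    · have humem : u ∈ l.dropLast := by
        rw [hsplit] at hu
        rcases List.mem_append.1 hu with h | h
        · exact h
        · simp only [List.mem_singleton] at h; exact absurd h hux
      refine Finset.mem_insert_of_mem ?_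
      obtain ⟨huF, hum⟩ := hmem u humem
      -- the suffix of l starting at u is a witness for u
      obtain ⟨s, t, hst⟩ := List.append_of_mem humem
      have hl_decomp : l = (s ++ [u]) ++ (t ++ [x]) := by
        have h1 : l.dropLast = s ++ u :: t := hst
        rw [hsplit, h1]
        simp
      have hsuf_ne : (u :: (t ++ [x])) ≠ [] := by simp
      have hl_decomp2 : l = s ++ (u :: (t ++ [x])) := by
        rw [hl_decomp]; simp
      have hsufwlk : (u :: (t ++ [x])) ∈ wlk G hlf x ((u :: (t ++ [x])).length - 1) := by
        refine mem_wlk.2 ⟨by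
          simp only [List.length_cons, List.length_append, List.length_singleton]
          omega, ?_, ?_⟩
        · exact hch.suffix ⟨s, hl_decomp2.symm⟩
        · rw [show (u :: (t ++ [x])) = (u :: t) ++ [x] from by simp, List.getLast?_concat]
      refine Finset.mem_filter.2 ⟨huF, hum, _, _, hsufwlk, rfl, ?_⟩
      intro u' hu'
      have : (u :: (t ++ [x])).dropLast = u :: t := by
        rw [show (u :: (t ++ [x])) = (u :: t) ++ [x] from by simp, List.dropLast_concat]
      rw [this] at hu'
      apply hmem
      rw [hst]
      exact List.mem_append_right s hu'
  -- the flip map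
  set Φ : (∀ a ∈ F1, Bool) → (∀ a ∈ F1, Bool) := fun p => fun v hv =>
    if v ∈ Cp p then !(p v hv) else p v hv with hΦ
  have hΦ_patch : ∀ p, cp (Φ p) = flipSet (Cp p) (cp p) := by
    intro p; funext v
    by_cases hv : v ∈ F1
    · simp only [hcp, patch, hv, dif_pos, flipSet, hΦ]
    · have hvC : v ∉ Cp p := fun h => hv (hCpF p h)
      simp only [hcp, patch, hv, dif_neg, not_false_iff, flipSet, if_neg hvC]
  -- energy gain
  have hgain : ∀ p, β * E (cp p) + 4 * β * (M p)
      ≤ β * E (cp (Φ p)) - (2*(g:ℝ)*β) * ((Cp p).card : ℝ) := by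
    intro p
    have hEflip : E (cp (Φ p)) = E (cp p)
        - 2 * ∑ u ∈ (cl G hlf F1) ∩ (Cp p),
            ∑ v ∈ ((cl G hlf F1).filter (fun v => G.Adj u v)) \ (Cp p),
              spin (cp p u) * spin (cp p v) := by
      rw [hΦ_patch p]; exact energy_flip F1 (Cp p) (cp p)
    have hinter : (cl G hlf F1) ∩ (Cp p) = Cp p :=
      Finset.inter_eq_right.2 (le_trans (hCpF p) (subset_cl F1))
    have hneg : ∑ u ∈ (cl G hlf F1) ∩ (Cp p),
        ∑ v ∈ ((cl G hlf F1).filter (fun v => G.Adj u v)) \ (Cp p),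
          spin (cp p u) * spin (cp p v)
        = - ∑ u ∈ Cp p, ∑ v ∈ ((cl G hlf F1).filter (fun v => G.Adj u v)) \ (Cp p),
            spin (cp p v) := by
      rw [hinter, ← Finset.sum_neg_distrib]
      refine Finset.sum_congr rfl fun u hu => ?_
      rw [← Finset.sum_neg_distrib]
      refine Finset.sum_congr rfl fun v _ => ?_
      rw [hCp_minus p u hu, spin_false]
      ring
    have hT := gain_lb hconn g o hgrow m i him Bm hBm F1 hF1 x hx (cp p) (hcp_x p)
      (hcp_top p) (Cp p) (hCpF p) (hCp_minus p) (hCp_max p)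
    have hMj : (M p : ℝ) ≤ (((Cp p).filter (fun u => G.Adj u x)).card : ℝ) := by
      have hsub : (F1.filter (fun v => G.Adj x v)).filter (fun v => cp p v = false)
          ⊆ (Cp p).filter (fun u => G.Adj u x) := by
        intro v hv
        simp only [Finset.mem_filter] at hv
        obtain ⟨⟨hvF, hadj⟩, hm⟩ := hv
        exact Finset.mem_filter.2 ⟨hD_sub p v hvF hadj hm, hadj.symm⟩
      exact_mod_cast Finset.card_le_card hsub
    rw [hEflip, hneg]
    have hexp : E (cp p) - 2 * (- ∑ u ∈ Cp p,
        ∑ v ∈ ((cl G hlf F1).filter (fun v => G.Adj u v)) \ (Cp p), spin (cp p v))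
        = E (cp p) + 2 * ∑ u ∈ Cp p,
          ∑ v ∈ ((cl G hlf F1).filter (fun v => G.Adj u v)) \ (Cp p), spin (cp p v) := by
      ring
    rw [hexp]
    have h2 : (g:ℝ) * ((Cp p).card : ℝ) + 2 * (M p : ℝ)
        ≤ ∑ u ∈ Cp p, ∑ v ∈ ((cl G hlf F1).filter (fun v => G.Adj u v)) \ (Cp p),
            spin (cp p v) := by
      calc (g:ℝ) * ((Cp p).card : ℝ) + 2 * (M p : ℝ)
          ≤ (g:ℝ) * ((Cp p).card : ℝ)
            + 2 * (((Cp p).filter (fun u => G.Adj u x)).card : ℝ) := by linarith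
        _ ≤ _ := hT
    nlinarith [hwpos p]
  -- split the sum according to whether M p = 0
  rw [← Finset.sum_filter_add_sum_filter_not P (fun p => M p = 0)]
  have hzero_part : ∑ p ∈ P.filter (fun p => M p = 0),
      Real.exp (4*β*((M p : ℝ))) * w p ≤ ∑ p ∈ P, w p := by
    refine le_trans (le_of_eq (Finset.sum_congr rfl fun p hp => ?_))
      (Finset.sum_le_sum_of_subset_of_nonneg (Finset.filter_subset _ _)
        (fun p _ _ => le_of_lt (hwpos p)))
    have : M p = 0 := (Finset.mem_filter.1 hp).2
    rw [this]
    simp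
  have hpos_part : ∑ p ∈ P.filter (fun p => ¬ M p = 0),
      Real.exp (4*β*((M p : ℝ))) * w p
      ≤ (2*(Δ:ℝ)^2 * Real.exp (-(2*(g:ℝ)*β))) * ∑ p ∈ P, w p := by
    -- per-element bound
    have hper : ∀ p ∈ P.filter (fun p => ¬ M p = 0),
        Real.exp (4*β*((M p : ℝ))) * w p
          ≤ w (Φ p) * Real.exp (-(2*(g:ℝ)*β) * ((Cp p).card : ℝ)) := by
      intro p hp
      rw [hw]
      rw [← Real.exp_add, ← Real.exp_add]
      apply Real.exp_le_exp.2
      have := hgain p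
      linarith
    -- injectivity of p ↦ (Φ p, Cp p)
    set Ψ : (∀ a ∈ F1, Bool) → (∀ a ∈ F1, Bool) × Finset V := fun p => (Φ p, Cp p) with hΨ
    have hinj : Set.InjOn Ψ (P.filter (fun p => ¬ M p = 0)) := by
      intro p₁ h₁ p₂ h₂ heq
      have hC : Cp p₁ = Cp p₂ := congrArg Prod.snd heq
      have hq : Φ p₁ = Φ p₂ := congrArg Prod.fst heq
      funext v hv
      have e1 : Φ p₁ v hv = if v ∈ Cp p₁ then !(p₁ v hv) else p₁ v hv := rfl
      have e2 : Φ p₂ v hv = if v ∈ Cp p₂ then !(p₂ v hv) else p₂ v hv := rfl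
      have e3 : Φ p₁ v hv = Φ p₂ v hv := by rw [hq]
      by_cases hvC : v ∈ Cp p₁
      · rw [e1, e2, if_pos hvC, if_pos (hC ▸ hvC)] at e3
        have := congrArg (fun b => !b) e3
        simpa using this
      · rw [e1, e2, if_neg hvC, if_neg (hC ▸ hvC)] at e3
        exact e3
    -- image is inside P ×ˢ 𝒞'
    set 𝒞' := F1.powerset.filter (fun C => C.Nonempty ∧ connX G hlf x C) with h𝒞'
    have hmaps : ∀ p ∈ P.filter (fun p => ¬ M p = 0), Ψ p ∈ P ×ˢ 𝒞' := by
      intro p hp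
      obtain ⟨hpP, hpM⟩ := Finset.mem_filter.1 hp
      refine Finset.mem_product.2 ⟨?_, ?_⟩
      · exact Finset.mem_pi.2 fun v hv => Finset.mem_univ _
      · refine Finset.mem_filter.2 ⟨Finset.mem_powerset.2 (hCpF p), ?_, hCp_conn p⟩
        -- nonempty since M p ≥ 1
        have : 0 < M p := Nat.pos_of_ne_zero hpM
        obtain ⟨v, hv⟩ := Finset.card_pos.1 this
        simp only [Finset.mem_filter] at hv
        obtain ⟨⟨hvF, hadj⟩, hm⟩ := hv
        exact ⟨v, hD_sub p v hvF hadj hm⟩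
    calc ∑ p ∈ P.filter (fun p => ¬ M p = 0), Real.exp (4*β*((M p : ℝ))) * w p
        ≤ ∑ p ∈ P.filter (fun p => ¬ M p = 0),
            w (Φ p) * Real.exp (-(2*(g:ℝ)*β) * ((Cp p).card : ℝ)) :=
          Finset.sum_le_sum hper
      _ = ∑ y ∈ (P.filter (fun p => ¬ M p = 0)).image Ψ,
            w y.1 * Real.exp (-(2*(g:ℝ)*β) * ((y.2).card : ℝ)) := by
          rw [Finset.sum_image (fun p hp q hq h => hinj (Finset.mem_coe.2 hp)
            (Finset.mem_coe.2 hq) h)]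
      _ ≤ ∑ y ∈ P ×ˢ 𝒞', w y.1 * Real.exp (-(2*(g:ℝ)*β) * ((y.2).card : ℝ)) := by
          refine Finset.sum_le_sum_of_subset_of_nonneg ?_ (fun y _ _ => by positivity)
          intro y hy
          obtain ⟨p, hp, rfl⟩ := Finset.mem_image.1 hy
          exact hmaps p hp
      _ = ∑ q ∈ P, ∑ C ∈ 𝒞', w q * Real.exp (-(2*(g:ℝ)*β) * (C.card : ℝ)) := by
          rw [Finset.sum_product]
      _ = (∑ q ∈ P, w q) * (∑ C ∈ 𝒞', Real.exp (-(2*(g:ℝ)*β) * (C.card : ℝ))) := by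
          rw [Finset.sum_mul_sum]
      _ ≤ (∑ q ∈ P, w q) * (2*(Δ:ℝ)^2 * Real.exp (-(2*(g:ℝ)*β))) := by
          refine mul_le_mul_of_nonneg_left ?_ ?_
          · exact cluster_sum_bound x F1 hxF hΔ hg hβ
          · exact Finset.sum_nonneg fun q _ => le_of_lt (hwpos q)
      _ = (2*(Δ:ℝ)^2 * Real.exp (-(2*(g:ℝ)*β))) * ∑ p ∈ P, w p := by ring
  have := add_le_add hzero_part hpos_part
  calc ∑ p ∈ P.filter (fun p => M p = 0), Real.exp (4*β*((M p : ℝ))) * w p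
        + ∑ p ∈ P.filter (fun p => ¬ M p = 0), Real.exp (4*β*((M p : ℝ))) * w p
      ≤ ∑ p ∈ P, w p + (2*(Δ:ℝ)^2 * Real.exp (-(2*(g:ℝ)*β))) * ∑ p ∈ P, w p := this
    _ = (1 + 2*(Δ:ℝ)^2 * Real.exp (-(2*(g:ℝ)*β))) * ∑ p ∈ P, w p := by ring

end Aux

end IsingGlauber

open IsingGlauber

/-- bound (4.17) on `‖h_x‖_∞` in the paper: for `β` large, the ratio
of the probabilities that the Gibbs measure on `F_{i+1}` with boundary condition
`τ^{x,+}`, resp. `τ^{x,-}`, produces a given configuration `σ` on `F_{i+1}` is at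
most `1 + c e^{-β'}`, with `β' = 2gβ - δ`, `δ = 1 + log(Δ+1)`. -/
theorem statement14 {V : Type*} [DecidableEq V] [Infinite V]
    (G : SimpleGraph V) (hlf : G.LocallyFinite) (hconn : G.Connected)
    (g Δ : ℕ) (hg : 1 ≤ g) (o : V)
    (hgrow : IsGrowing G hlf g o)
    (hΔ : ∀ v : V, (nbr G hlf v).card ≤ Δ)
    (δ : ℝ) (hδ : δ = 1 + Real.log ((Δ : ℝ) + 1)) :
    ∃ β₀ c : ℝ, 0 < β₀ ∧ 0 < c ∧
      ∀ β : ℝ, β₀ ≤ β →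
      ∀ (m : ℕ) (Bm : Finset V), (∀ v : V, v ∈ Bm ↔ G.dist o v ≤ m) →
      ∀ i : ℕ, i ≤ m →
      ∀ x : V, G.dist o x = i →
      ∀ F1 : Finset V, F1 = Bm.filter (fun v => i + 1 ≤ G.dist o v) →
      ∀ τ : V → Bool, (∀ v : V, G.dist o v = m + 1 → τ v = true) →
      ∀ σ : V → Bool,
        gProb (fun σ' => β * energyB G hlf F1 σ') F1 (Function.update τ x true)
            (fun σ' => ∀ v ∈ F1, σ' v = σ v) /
          gProb (fun σ' => β * energyB G hlf F1 σ') F1 (Function.update τ x false)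
            (fun σ' => ∀ v ∈ F1, σ' v = σ v) ≤
          1 + c * Real.exp (-(2 * (g : ℝ) * β - δ)) := by
  classical
  refine ⟨(Δ:ℝ)^2 + 1, 2*(Δ:ℝ)^2 + 1, by positivity, by positivity, ?_⟩
  intro β hβ m Bm hBm i him x hx F1 hF1 τ hτ σ
  have hβpos : 0 < β := by nlinarith [sq_nonneg (Δ:ℝ)]
  have hxF : x ∉ F1 := by
    rw [hF1]; simp only [Finset.mem_filter, hx, not_and]; intro _; omega
  set ηp : V → Bool := Function.update τ x true with hηp
  set ηm : V → Bool := Function.update τ x false with hηm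
  set E : (V → Bool) → ℝ := energyB G hlf F1 with hE
  set P : Finset (∀ a ∈ F1, Bool) := F1.pi (fun _ => (Finset.univ : Finset Bool)) with hPdef
  set p₀ : ∀ a ∈ F1, Bool := fun v _ => σ v with hp₀def
  have hp₀ : p₀ ∈ P := Finset.mem_pi.2 fun v hv => Finset.mem_univ _
  -- numerators of the Gibbs probabilities
  have hnum : ∀ η : V → Bool,
      gProb (fun σ' => β * E σ') F1 η (fun σ' => ∀ v ∈ F1, σ' v = σ v)
        = Real.exp (β * E (patch F1 η p₀)) / wsum (fun σ' => β * E σ') F1 η (fun _ => 1) := by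
    intro η
    unfold gProb gExp
    congr 1
    unfold wsum
    rw [Finset.sum_eq_single_of_mem p₀ hp₀]
    · have hev : (∀ v ∈ F1, patch F1 η p₀ v = σ v) := by
        intro v hv; simp [patch, hv, hp₀def]
      beta_reduce
      rw [if_pos hev, mul_one]
    · intro p hp hne
      have hnev : ¬ (∀ v ∈ F1, patch F1 η p v = σ v) := by
        intro hall
        apply hne
        funext v hv
        have := hall v hv
        simpa [patch, hv] using this
      beta_reduce
      rw [if_neg hnev, mul_zero]
  -- denominators are positive
  have hZ : ∀ η : V → Bool, wsum (fun σ' => β * E σ') F1 η (fun _ => 1)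
      = ∑ p ∈ P, Real.exp (β * E (patch F1 η p)) := by
    intro η
    unfold wsum
    simp only [mul_one, hPdef]
  have hZpos : ∀ η : V → Bool, 0 < wsum (fun σ' => β * E σ') F1 η (fun _ => 1) := by
    intro η
    rw [hZ]
    exact Finset.sum_pos (fun p _ => Real.exp_pos _) ⟨p₀, hp₀⟩
  -- key pairwise energy inequality
  set M : (∀ a ∈ F1, Bool) → ℕ := fun p =>
    ((F1.filter (fun v => G.Adj x v)).filter (fun v => patch F1 ηp p v = false)).card with hM
  have hflipq : ∀ q : (∀ a ∈ F1, Bool), patch F1 ηm q = flipSet {x} (patch F1 ηp q) := by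
    intro q; funext v
    by_cases hv : v ∈ F1
    · have hvx : v ≠ x := fun h => hxF (h ▸ hv)
      simp [patch, hv, flipSet, hvx]
    · by_cases hvx : v = x
      · subst hvx
        simp [patch, hv, flipSet, hηm, hηp]
      · simp [patch, hv, flipSet, hvx, hηm, hηp, Function.update_of_ne hvx]
  have hEdiff : ∀ q : (∀ a ∈ F1, Bool), E (patch F1 ηm q) = E (patch F1 ηp q)
      - 2 * ∑ u ∈ (cl G hlf F1) ∩ {x},
          ∑ v ∈ ((cl G hlf F1).filter (fun v => G.Adj u v)) \ {x},
            spin (patch F1 ηp q u) * spin (patch F1 ηp q v) := by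
    intro q
    rw [hE, hflipq q]
    exact energy_flip F1 {x} (patch F1 ηp q)
  have hcpx : ∀ q : (∀ a ∈ F1, Bool), patch F1 ηp q x = true := by
    intro q; simp [patch, hxF, hηp]
  have hKeyPair : ∀ p : (∀ a ∈ F1, Bool),
      E (patch F1 ηp p₀) + E (patch F1 ηm p)
        ≤ E (patch F1 ηm p₀) + E (patch F1 ηp p) + 4 * (M p : ℝ) := by
    intro p
    rw [hEdiff p, hEdiff p₀]
    by_cases hxcl : x ∈ cl G hlf F1
    · have hint : (cl G hlf F1) ∩ {x} = {x} := by
        ext u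
        simp only [Finset.mem_inter, Finset.mem_singleton]
        constructor
        · exact fun h => h.2
        · rintro rfl; exact ⟨hxcl, rfl⟩
      rw [hint]
      simp only [Finset.sum_singleton]
      set D' := ((cl G hlf F1).filter (fun v => G.Adj x v)) \ {x} with hD'
      have hone : ∀ q : (∀ a ∈ F1, Bool),
          ∑ v ∈ D', spin (patch F1 ηp q x) * spin (patch F1 ηp q v)
            = ∑ v ∈ D', spin (patch F1 ηp q v) := by
        intro q
        refine Finset.sum_congr rfl fun v _ => ?_
        rw [hcpx q, spin_true, one_mul]
      rw [hone, hone]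
      have hptwise : ∀ v ∈ D', spin (patch F1 ηp p₀ v) - spin (patch F1 ηp p v)
          ≤ (if v ∈ F1 ∧ patch F1 ηp p v = false then 2 else 0) := by
        intro v _
        by_cases hvF : v ∈ F1
        · by_cases hm : patch F1 ηp p v = false
          · rw [if_pos ⟨hvF, hm⟩, hm, spin_false]
            have := spin_le_one (patch F1 ηp p₀ v)
            linarith
          · have ht : patch F1 ηp p v = true := by
              cases h : patch F1 ηp p v
              · exact absurd h hm
              · rfl
            rw [if_neg (fun hc => hm hc.2), ht, spin_true]
            have := spin_le_one (patch F1 ηp p₀ v)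
            linarith
        · have he : patch F1 ηp p₀ v = patch F1 ηp p v := by
            simp [patch, hvF]
          rw [he, if_neg (fun hc => hvF hc.1)]
          simp
      have hSdiff : ∑ v ∈ D', spin (patch F1 ηp p₀ v) - ∑ v ∈ D', spin (patch F1 ηp p v)
          ≤ 2 * (M p : ℝ) := by
        rw [← Finset.sum_sub_distrib]
        calc ∑ v ∈ D', (spin (patch F1 ηp p₀ v) - spin (patch F1 ηp p v))
            ≤ ∑ v ∈ D', (if v ∈ F1 ∧ patch F1 ηp p v = false then (2:ℝ) else 0) :=
              Finset.sum_le_sum hptwise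
          _ = ∑ v ∈ D'.filter (fun v => v ∈ F1 ∧ patch F1 ηp p v = false), (2:ℝ) := by
              rw [Finset.sum_filter]
          _ = 2 * ((D'.filter (fun v => v ∈ F1 ∧ patch F1 ηp p v = false)).card : ℝ) := by
              rw [Finset.sum_const, nsmul_eq_mul]; ring
          _ ≤ 2 * (M p : ℝ) := by
              have hsub : D'.filter (fun v => v ∈ F1 ∧ patch F1 ηp p v = false)
                  ⊆ (F1.filter (fun v => G.Adj x v)).filter
                    (fun v => patch F1 ηp p v = false) := by
                intro v hv
                simp only [Finset.mem_filter, Finset.mem_sdiff, hD'] at hv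
                obtain ⟨⟨⟨_, hadj⟩, _⟩, hvF, hm⟩ := hv
                exact Finset.mem_filter.2 ⟨Finset.mem_filter.2 ⟨hvF, hadj⟩, hm⟩
              have := Finset.card_le_card hsub
              have : ((D'.filter (fun v => v ∈ F1 ∧ patch F1 ηp p v = false)).card : ℝ)
                  ≤ (M p : ℝ) := by exact_mod_cast this
              linarith
      linarith
    · have hint : (cl G hlf F1) ∩ {x} = ∅ := by
        ext u
        simp only [Finset.mem_inter, Finset.mem_singleton, Finset.notMem_empty, iff_false,
          not_and]
        rintro h rfl; exact hxcl h
      rw [hint]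
      simp only [Finset.sum_empty, mul_zero, sub_zero]
      have : (0:ℝ) ≤ 4 * (M p : ℝ) := by positivity
      linarith
  -- the main estimate
  set K : ℝ := 1 + (2*(Δ:ℝ)^2 + 1) * Real.exp (-(2 * (g:ℝ) * β - δ)) with hK
  have hεK : 1 + 2*(Δ:ℝ)^2 * Real.exp (-(2*(g:ℝ)*β)) ≤ K := by
    have hδ0 : 0 ≤ δ := by
      rw [hδ]
      have : (0:ℝ) ≤ Real.log ((Δ:ℝ) + 1) := Real.log_nonneg (by push_cast; linarith)
      linarith
    have hsplit : Real.exp (-(2*(g:ℝ)*β - δ)) = Real.exp δ * Real.exp (-(2*(g:ℝ)*β)) := by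
      rw [← Real.exp_add]; ring_nf
    have h1 : (1:ℝ) ≤ Real.exp δ := Real.one_le_exp hδ0
    have hxp : (0:ℝ) < Real.exp (-(2*(g:ℝ)*β)) := Real.exp_pos _
    rw [hK, hsplit]
    have hc0 : (0:ℝ) ≤ (2*(Δ:ℝ)^2+1) * Real.exp (-(2*(g:ℝ)*β)) := by positivity
    have h2 := mul_le_mul_of_nonneg_left h1 hc0
    rw [mul_one] at h2
    nlinarith
  have hKpos : 0 < K := by
    have : (0:ℝ) < Real.exp (-(2*(g:ℝ)*β)) := Real.exp_pos _
    nlinarith [sq_nonneg (Δ:ℝ)]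
  -- combine into the key product inequality
  set Np : ℝ := Real.exp (β * E (patch F1 ηp p₀)) with hNp
  set Nm : ℝ := Real.exp (β * E (patch F1 ηm p₀)) with hNm
  set Zp : ℝ := wsum (fun σ' => β * E σ') F1 ηp (fun _ => 1) with hZp
  set Zm : ℝ := wsum (fun σ' => β * E σ') F1 ηm (fun _ => 1) with hZm
  have key : Np * Zm ≤ K * (Nm * Zp) := by
    have e1 : Np * Zm = ∑ p ∈ P, Real.exp (β * E (patch F1 ηp p₀) + β * E (patch F1 ηm p)) := by
      rw [hZm, hZ, Finset.mul_sum]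
      refine Finset.sum_congr rfl fun p _ => ?_
      rw [hNp, ← Real.exp_add]
    have e2 : ∀ p : (∀ a ∈ F1, Bool),
        Real.exp (β * E (patch F1 ηp p₀) + β * E (patch F1 ηm p))
          ≤ Nm * (Real.exp (4*β*(M p : ℝ)) * Real.exp (β * E (patch F1 ηp p))) := by
      intro p
      rw [hNm, ← Real.exp_add, ← Real.exp_add]
      apply Real.exp_le_exp.2
      have := hKeyPair p
      nlinarith
    have e3 : ∑ p ∈ P, Real.exp (β * E (patch F1 ηp p₀) + β * E (patch F1 ηm p))
        ≤ Nm * ∑ p ∈ P, Real.exp (4*β*(M p : ℝ)) * Real.exp (β * E (patch F1 ηp p)) := by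
      rw [Finset.mul_sum]
      exact Finset.sum_le_sum fun p _ => e2 p
    have e4 : ∑ p ∈ P, Real.exp (4*β*(M p : ℝ)) * Real.exp (β * E (patch F1 ηp p))
        ≤ (1 + 2*(Δ:ℝ)^2 * Real.exp (-(2*(g:ℝ)*β))) *
            ∑ p ∈ P, Real.exp (β * E (patch F1 ηp p)) :=
      peierls_main hconn g Δ hg o hgrow hΔ m i him Bm hBm F1 hF1 x hx τ hτ β hβ
    have e5 : (∑ p ∈ P, Real.exp (β * E (patch F1 ηp p))) = Zp := (hZ ηp).symm
    have hNmpos : 0 < Nm := Real.exp_pos _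
    have hZppos : 0 < Zp := hZpos ηp
    have hsum_pos : 0 < ∑ p ∈ P, Real.exp (β * E (patch F1 ηp p)) := by
      rw [e5]; exact hZppos
    calc Np * Zm = ∑ p ∈ P, Real.exp (β * E (patch F1 ηp p₀) + β * E (patch F1 ηm p)) := e1
      _ ≤ Nm * ∑ p ∈ P, Real.exp (4*β*(M p : ℝ)) * Real.exp (β * E (patch F1 ηp p)) := e3
      _ ≤ Nm * ((1 + 2*(Δ:ℝ)^2 * Real.exp (-(2*(g:ℝ)*β))) *
            ∑ p ∈ P, Real.exp (β * E (patch F1 ηp p))) :=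
          mul_le_mul_of_nonneg_left e4 (le_of_lt hNmpos)
      _ ≤ Nm * (K * ∑ p ∈ P, Real.exp (β * E (patch F1 ηp p))) := by
          refine mul_le_mul_of_nonneg_left ?_ (le_of_lt hNmpos)
          exact mul_le_mul_of_nonneg_right hεK (le_of_lt hsum_pos)
      _ = K * (Nm * Zp) := by rw [e5]; ring
  -- conclude by division algebra
  show gProb (fun σ' => β * E σ') F1 ηp (fun σ' => ∀ v ∈ F1, σ' v = σ v) /
      gProb (fun σ' => β * E σ') F1 ηm (fun σ' => ∀ v ∈ F1, σ' v = σ v) ≤ K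
  rw [hnum ηp, hnum ηm, ← hNp, ← hNm, ← hZp, ← hZm]
  have hZppos : 0 < Zp := hZpos ηp
  have hZmpos : 0 < Zm := hZpos ηm
  have hNmpos : 0 < Nm := Real.exp_pos _
  have h1 : Np / Zp / (Nm / Zm) = (Np * Zm) / (Nm * Zp) := by
    field_simp
  rw [h1, div_le_iff₀ (by positivity)]
  exact key
end
end

section
/- Let B = (V,E) be a finite connected graph with an odd number n of vertices, let β > 0, and let μ be the free-boundary Ising Gibbs measure on {−1,+1}^V at inverse temperature β with zero external field. Let m_B(σ) = Σ_{x∈V} σ_x and let 𝟙_{m_B>0} be the indicator of positive magnetization. Then Var_μ(𝟙_{m_B>0}) = 1/4, the Dirichlet form satisfies D(𝟙_{m_B>0}) ≤ ((n+2)/2) μ(m_B = 1), and consequently the spectral gap satisfies c_gap(μ) ≤ 2(n+2) μ(m_B = 1). -/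
/- Common framework: Ising model with boundary conditions on (finite pieces of)
   locally finite graphs, heat-bath Glauber dynamics quantities. -/

open Finset
open scoped Classical

noncomputable section

open IsingGlauber

namespace IsingProof

open IsingGlauber

variable {V : Type} [Fintype V] [DecidableEq V]

lemma spin_not (b : Bool) : spin (!b) = - spin b := by cases b <;> simp [spin]

lemma spin_cases (b : Bool) : spin b = 1 ∨ spin b = -1 := by cases b <;> simp [spin]

/-- Global spin flip. -/
def negc (σ : V → Bool) : V → Bool := fun v => !(σ v)

lemma negc_invol : Function.Involutive (negc (V := V)) := by
  intro σ; funext v; simp [negc]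

lemma sum_negc (σ : V → Bool) :
    ∑ v : V, spin (negc σ v) = - ∑ v : V, spin (σ v) := by
  rw [← Finset.sum_neg_distrib]
  exact Finset.sum_congr rfl fun v _ => by simp [negc, spin_not]

lemma energyF_negc (G : SimpleGraph V) (σ : V → Bool) :
    energyF G Finset.univ (negc σ) = energyF G Finset.univ σ := by
  unfold energyF
  congr 1
  refine Finset.sum_congr rfl fun x _ => Finset.sum_congr rfl fun y _ => ?_
  show spin (!(σ x)) * spin (!(σ y)) = _
  rw [spin_not, spin_not]; ring

/-- parity: the magnetization is an odd integer. -/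
lemma m_odd (hodd : Odd (Fintype.card V)) (σ : V → Bool) :
    ∃ k : ℤ, ∑ v : V, spin (σ v) = ((2 * k + 1 : ℤ) : ℝ) := by
  obtain ⟨p, hp⟩ := hodd
  set s : ℤ := ∑ v : V, (if σ v then (0 : ℤ) else 1) with hs
  refine ⟨p - s, ?_⟩
  have h1 : ∑ v : V, spin (σ v) =
      ((∑ v : V, (if σ v then (1 : ℤ) else -1) : ℤ) : ℝ) := by
    push_cast
    exact Finset.sum_congr rfl fun v _ => by cases h : σ v <;> simp [spin, h]
  have h2 : (∑ v : V, (if σ v then (1 : ℤ) else -1) : ℤ) =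
      (Fintype.card V : ℤ) - 2 * s := by
    have : ∀ v : V, (if σ v then (1 : ℤ) else -1) = 1 - 2 * (if σ v then 0 else 1) := by
      intro v; cases h : σ v <;> simp
    rw [Finset.sum_congr rfl fun v _ => this v, Finset.sum_sub_distrib, ← Finset.mul_sum]
    simp [Finset.card_univ]
    exact hs.symm
  rw [h1, h2, hp]
  push_cast
  ring

lemma wsum_univ (E : (V → Bool) → ℝ) (η : V → Bool) (f : (V → Bool) → ℝ) :
    wsum E Finset.univ η f = ∑ σ : V → Bool, Real.exp (E σ) * f σ := by
  unfold wsum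
  refine Finset.sum_bij' (fun p _ => patch Finset.univ η p)
    (fun σ _ => fun v _ => σ v) (fun _ _ => Finset.mem_univ _)
    (fun _ _ => by simp [Finset.mem_pi]) ?_ ?_ (fun _ _ => rfl)
  · intro p hp
    funext v hv
    simp [patch]
  · intro σ _
    funext v
    simp [patch]

lemma Z_pos (E : (V → Bool) → ℝ) : 0 < ∑ σ : V → Bool, Real.exp (E σ) :=
  Finset.sum_pos (fun σ _ => Real.exp_pos _) Finset.univ_nonempty

lemma gExp_univ (E : (V → Bool) → ℝ) (η : V → Bool) (f : (V → Bool) → ℝ) :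
    gExp E Finset.univ η f =
      (∑ σ : V → Bool, Real.exp (E σ) * f σ) / (∑ σ : V → Bool, Real.exp (E σ)) := by
  unfold gExp
  rw [wsum_univ, wsum_univ]
  simp

lemma gExp_nonneg (E : (V → Bool) → ℝ) (η : V → Bool) {f : (V → Bool) → ℝ}
    (hf : ∀ σ, 0 ≤ f σ) : 0 ≤ gExp E Finset.univ η f := by
  rw [gExp_univ]
  exact div_nonneg (Finset.sum_nonneg fun σ _ =>
    mul_nonneg (Real.exp_pos _).le (hf σ)) (Z_pos E).le

lemma gExp_mono (E : (V → Bool) → ℝ) (η : V → Bool) {f g : (V → Bool) → ℝ}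
    (hfg : ∀ σ, f σ ≤ g σ) : gExp E Finset.univ η f ≤ gExp E Finset.univ η g := by
  rw [gExp_univ, gExp_univ]
  rw [div_le_div_iff_of_pos_right (Z_pos E)]
  exact Finset.sum_le_sum fun σ _ => mul_le_mul_of_nonneg_left (hfg σ) (Real.exp_pos _).le

lemma gVar_univ_nonneg (E : (V → Bool) → ℝ) (η : V → Bool) (f : (V → Bool) → ℝ) :
    0 ≤ gVar E Finset.univ η f := by
  have hZ := Z_pos E
  have key : (∑ σ : V → Bool, Real.exp (E σ) * f σ) ^ 2 ≤
      (∑ σ : V → Bool, Real.exp (E σ)) * ∑ σ : V → Bool, Real.exp (E σ) * f σ ^ 2 := by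
    have h := Finset.sum_mul_sq_le_sq_mul_sq Finset.univ
      (fun σ : V → Bool => Real.sqrt (Real.exp (E σ)))
      (fun σ : V → Bool => Real.sqrt (Real.exp (E σ)) * f σ)
    have e1 : ∀ σ : V → Bool,
        Real.sqrt (Real.exp (E σ)) * (Real.sqrt (Real.exp (E σ)) * f σ) =
          Real.exp (E σ) * f σ := fun σ => by
      rw [← mul_assoc, Real.mul_self_sqrt (Real.exp_pos _).le]
    have e2 : ∀ σ : V → Bool, Real.sqrt (Real.exp (E σ)) ^ 2 = Real.exp (E σ) :=
      fun σ => Real.sq_sqrt (Real.exp_pos _).le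
    have e3 : ∀ σ : V → Bool, (Real.sqrt (Real.exp (E σ)) * f σ) ^ 2 =
        Real.exp (E σ) * f σ ^ 2 := fun σ => by
      rw [mul_pow, e2]
    calc (∑ σ : V → Bool, Real.exp (E σ) * f σ) ^ 2
        = (∑ σ : V → Bool, Real.sqrt (Real.exp (E σ)) *
            (Real.sqrt (Real.exp (E σ)) * f σ)) ^ 2 := by
          rw [Finset.sum_congr rfl fun σ _ => (e1 σ)]
      _ ≤ (∑ σ : V → Bool, Real.sqrt (Real.exp (E σ)) ^ 2) *
            ∑ σ : V → Bool, (Real.sqrt (Real.exp (E σ)) * f σ) ^ 2 := h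
      _ = _ := by
          rw [Finset.sum_congr rfl fun σ _ => (e2 σ),
            Finset.sum_congr rfl fun σ _ => (e3 σ)]
  unfold gVar
  rw [gExp_univ, gExp_univ, sub_nonneg, div_pow, div_le_div_iff₀ (by positivity) (by positivity)]
  nlinarith [hZ, key]

lemma patch_singleton (x : V) (σ : V → Bool)
    (p : (a : V) → a ∈ ({x} : Finset V) → Bool) :
    patch {x} σ p = Function.update σ x (p x (Finset.mem_singleton_self x)) := by
  funext v
  by_cases h : v = x
  · subst h; simp [patch, Function.update_self]
  · simp [patch, h, Function.update_of_ne h]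

lemma wsum_singleton (E : (V → Bool) → ℝ) (x : V) (σ : V → Bool) (g : (V → Bool) → ℝ) :
    wsum E {x} σ g =
      Real.exp (E (Function.update σ x true)) * g (Function.update σ x true) +
        Real.exp (E (Function.update σ x false)) * g (Function.update σ x false) := by
  unfold wsum
  rw [show (∑ p ∈ ({x} : Finset V).pi fun _ => (Finset.univ : Finset Bool),
      Real.exp (E (patch {x} σ p)) * g (patch {x} σ p)) =
      ∑ b : Bool, Real.exp (E (Function.update σ x b)) * g (Function.update σ x b) from ?_]
  · simp
  refine Finset.sum_bij' (fun p _ => p x (Finset.mem_singleton_self x))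
    (fun b _ => fun a _ => b) (fun _ _ => Finset.mem_univ _)
    (fun _ _ => by simp [Finset.mem_pi]) ?_ (fun _ _ => rfl) ?_
  · intro p hp
    funext a ha
    have : a = x := Finset.mem_singleton.mp ha
    subst this; rfl
  · intro p hp
    rw [patch_singleton]

lemma gVar_singleton_eq (E : (V → Bool) → ℝ) (x : V) (σ : V → Bool) (g : (V → Bool) → ℝ) :
    gVar E {x} σ g =
      Real.exp (E (Function.update σ x true)) * Real.exp (E (Function.update σ x false)) *
        (g (Function.update σ x true) - g (Function.update σ x false)) ^ 2 /
        (Real.exp (E (Function.update σ x true)) + Real.exp (E (Function.update σ x false))) ^ 2 := by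
  have h1 : (0:ℝ) < Real.exp (E (Function.update σ x true)) := Real.exp_pos _
  have h2 : (0:ℝ) < Real.exp (E (Function.update σ x false)) := Real.exp_pos _
  unfold gVar gExp
  rw [wsum_singleton, wsum_singleton, wsum_singleton]
  have h3 : Real.exp (E (Function.update σ x true)) +
      Real.exp (E (Function.update σ x false)) ≠ 0 := by positivity
  field_simp
  ring

lemma gVar_singleton_nonneg (E : (V → Bool) → ℝ) (x : V) (σ : V → Bool)
    (g : (V → Bool) → ℝ) : 0 ≤ gVar E {x} σ g := by
  rw [gVar_singleton_eq]
  positivity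

lemma gVar_singleton_le (E : (V → Bool) → ℝ) (x : V) (σ : V → Bool)
    (g : (V → Bool) → ℝ) :
    gVar E {x} σ g ≤ 1 / 4 *
      (g (Function.update σ x true) - g (Function.update σ x false)) ^ 2 := by
  rw [gVar_singleton_eq]
  set wt := Real.exp (E (Function.update σ x true)) with hwt
  set wf := Real.exp (E (Function.update σ x false)) with hwf
  have h1 : (0:ℝ) < wt := Real.exp_pos _
  have h2 : (0:ℝ) < wf := Real.exp_pos _
  rw [div_le_iff₀ (by positivity)]
  nlinarith [mul_nonneg (sq_nonneg (wt - wf))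
    (sq_nonneg (g (Function.update σ x true) - g (Function.update σ x false)))]

lemma gVar_singleton_zero (E : (V → Bool) → ℝ) (x : V) (σ : V → Bool)
    {g : (V → Bool) → ℝ}
    (h : g (Function.update σ x true) = g (Function.update σ x false)) :
    gVar E {x} σ g = 0 := by
  rw [gVar_singleton_eq, h]
  simp

lemma sum_update (σ : V → Bool) (x : V) (b : Bool) :
    ∑ v : V, spin (Function.update σ x b v) =
      ∑ v : V, spin (σ v) - spin (σ x) + spin b := by
  have h1 : ∀ τ : V → Bool, ∑ v : V, spin (τ v) =
      spin (τ x) + ∑ v ∈ Finset.univ.erase x, spin (τ v) := fun τ =>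
    (Finset.add_sum_erase _ _ (Finset.mem_univ x)).symm
  rw [h1 (Function.update σ x b), h1 σ, Function.update_self]
  have h2 : ∑ v ∈ Finset.univ.erase x, spin (Function.update σ x b v) =
      ∑ v ∈ Finset.univ.erase x, spin (σ v) :=
    Finset.sum_congr rfl fun v hv => by
      rw [Function.update_of_ne (Finset.ne_of_mem_erase hv)]
  rw [h2]; ring

end IsingProof


/-- for the free-boundary Ising measure on a finite connected graph
with an odd number `n` of vertices, the indicator of positive magnetization has
variance `1/4`, its Dirichlet form is at most `((n+2)/2) μ(m_B = 1)`, and hence the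
spectral gap is at most `2(n+2) μ(m_B = 1)`. -/
theorem statement16 {V : Type} [Fintype V] [DecidableEq V]
    (G : SimpleGraph V) (hconn : G.Connected)
    (n : ℕ) (hn : n = Fintype.card V) (hodd : Odd n)
    (β : ℝ) (hβ : 0 < β) :
    gVar (fun σ => β * energyF G Finset.univ σ) Finset.univ (fun _ => true)
        (fun σ => if 0 < ∑ v : V, spin (σ v) then 1 else 0) = 1 / 4 ∧
      dirich (fun σ => β * energyF G Finset.univ σ) Finset.univ (fun _ => true)
          (fun σ => if 0 < ∑ v : V, spin (σ v) then 1 else 0) ≤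
        ((n : ℝ) + 2) / 2 *
          gProb (fun σ => β * energyF G Finset.univ σ) Finset.univ (fun _ => true)
            (fun σ => ∑ v : V, spin (σ v) = 1) ∧
      cgap (fun σ => β * energyF G Finset.univ σ) Finset.univ (fun _ => true) ≤
        2 * ((n : ℝ) + 2) *
          gProb (fun σ => β * energyF G Finset.univ σ) Finset.univ (fun _ => true)
            (fun σ => ∑ v : V, spin (σ v) = 1) := by
  classical
  have hodd' : Odd (Fintype.card V) := hn ▸ hodd
  set E : (V → Bool) → ℝ := fun σ => β * energyF G Finset.univ σ with hE
  set η : V → Bool := fun _ => true with hη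
  set f : (V → Bool) → ℝ :=
    fun σ => if 0 < ∑ v : V, spin (σ v) then 1 else 0 with hf
  have hEneg : ∀ σ, E (IsingProof.negc σ) = E σ := fun σ => by
    simp only [hE]; rw [IsingProof.energyF_negc]
  have hmne : ∀ σ : V → Bool, (∑ v : V, spin (σ v)) ≠ 0 := by
    intro σ h
    obtain ⟨k, hk⟩ := IsingProof.m_odd hodd' σ
    rw [h] at hk
    have h2 : (2 * k + 1 : ℤ) = 0 := by exact_mod_cast hk.symm
    omega
  have hflip : ∀ g : (V → Bool) → ℝ,
      ∑ σ : V → Bool, Real.exp (E σ) * g σ =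
        ∑ σ : V → Bool, Real.exp (E σ) * g (IsingProof.negc σ) := by
    intro g
    refine Fintype.sum_equiv (Function.Involutive.toPerm _ IsingProof.negc_invol) _ _ ?_
    intro σ
    have he : (Function.Involutive.toPerm _ IsingProof.negc_invol) σ = IsingProof.negc σ := rfl
    rw [he, hEneg, IsingProof.negc_invol σ]
  have hZ : 0 < ∑ σ : V → Bool, Real.exp (E σ) := IsingProof.Z_pos E
  have hfneg : ∀ σ, f (IsingProof.negc σ) = 1 - f σ := by
    intro σ
    simp only [hf]
    rw [IsingProof.sum_negc σ]
    rcases lt_trichotomy (0 : ℝ) (∑ v : V, spin (σ v)) with h | h | h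
    · rw [if_neg (by linarith), if_pos h]; norm_num
    · exact absurd h.symm (hmne σ)
    · rw [if_pos (by linarith), if_neg (by linarith)]; norm_num
  have hExpf : gExp E Finset.univ η f = 1 / 2 := by
    rw [IsingProof.gExp_univ]
    have h1 : ∑ σ : V → Bool, Real.exp (E σ) * f σ =
        ∑ σ : V → Bool, Real.exp (E σ) * (1 - f σ) := by
      rw [hflip f]
      exact Finset.sum_congr rfl fun σ _ => by rw [hfneg]
    have h2 : ∑ σ : V → Bool, Real.exp (E σ) * (1 - f σ) =
        (∑ σ : V → Bool, Real.exp (E σ)) - ∑ σ : V → Bool, Real.exp (E σ) * f σ := by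
      rw [← Finset.sum_sub_distrib]
      exact Finset.sum_congr rfl fun σ _ => by ring
    have h3 : ∑ σ : V → Bool, Real.exp (E σ) * f σ =
        (∑ σ : V → Bool, Real.exp (E σ)) / 2 := by
      have := h1.trans h2; linarith
    rw [h3]
    rw [div_right_comm, div_self hZ.ne']
  have hfsq : (fun σ => f σ ^ 2) = f := by
    funext σ; simp only [hf]; split_ifs <;> norm_num
  have hVarf : gVar E Finset.univ η f = 1 / 4 := by
    unfold gVar
    rw [hfsq, hExpf]
    norm_num
  set g1 : (V → Bool) → ℝ :=
    fun σ => if (∑ v : V, spin (σ v)) = 1 then 1 else 0 with hg1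
  set gm1 : (V → Bool) → ℝ :=
    fun σ => if (∑ v : V, spin (σ v)) = -1 then 1 else 0 with hgm1
  have hProb : gProb E Finset.univ η (fun σ => ∑ v : V, spin (σ v) = 1) =
      gExp E Finset.univ η g1 := by
    unfold gProb
    first
    | rfl
    | congr 1
    | (congr 1
       funext σ
       simp only [hg1]
       split_ifs <;> rfl)
  have hg1nn : ∀ σ, (0:ℝ) ≤ g1 σ := fun σ => by
    simp only [hg1]; split_ifs <;> norm_num
  have hP1 : 0 ≤ gExp E Finset.univ η g1 := IsingProof.gExp_nonneg E η hg1nn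
  have hsymm : gExp E Finset.univ η gm1 = gExp E Finset.univ η g1 := by
    rw [IsingProof.gExp_univ, IsingProof.gExp_univ, hflip gm1]
    congr 1
    refine Finset.sum_congr rfl fun σ _ => ?_
    congr 1
    simp only [hgm1, hg1]
    rw [IsingProof.sum_negc σ]
    exact if_congr (by constructor <;> intro h <;> linarith) rfl rfl
  have hpoint : ∀ (x : V) (σ : V → Bool),
      gVar E {x} σ f ≤ 1 / 4 * (g1 σ + gm1 σ) := by
    intro x σ
    by_cases h1 : (∑ v : V, spin (σ v)) = 1 ∨ (∑ v : V, spin (σ v)) = -1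
    · have hb := IsingProof.gVar_singleton_le E x σ f
      have h01 : ∀ τ : V → Bool, f τ = 0 ∨ f τ = 1 := fun τ => by
        simp only [hf]; split_ifs <;> simp
      have hsq : (f (Function.update σ x true) - f (Function.update σ x false)) ^ 2 ≤ 1 := by
        rcases h01 (Function.update σ x true) with h | h <;>
          rcases h01 (Function.update σ x false) with h' | h' <;>
          rw [h, h'] <;> norm_num
      have hRHS : (1 : ℝ) ≤ g1 σ + gm1 σ := by
        have h2 : (0:ℝ) ≤ gm1 σ := by simp only [hgm1]; split_ifs <;> norm_num
        have h3 : (0:ℝ) ≤ g1 σ := hg1nn σ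
        rcases h1 with h | h
        · have : g1 σ = 1 := by simp only [hg1]; rw [if_pos h]
          linarith
        · have : gm1 σ = 1 := by simp only [hgm1]; rw [if_pos h]
          linarith
      linarith
    · push_neg at h1
      obtain ⟨hne1, hnem1⟩ := h1
      have hg1z : g1 σ = 0 := by simp only [hg1]; rw [if_neg hne1]
      have hgm1z : gm1 σ = 0 := by simp only [hgm1]; rw [if_neg hnem1]
      rw [hg1z, hgm1z]
      obtain ⟨k, hk⟩ := IsingProof.m_odd hodd' σ
      have hk0 : k ≠ 0 := by
        rintro rfl; apply hne1; rw [hk]; norm_num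
      have hkm1 : k ≠ -1 := by
        rintro rfl; apply hnem1; rw [hk]; norm_num
      have habs : (3 : ℝ) ≤ ∑ v : V, spin (σ v) ∨ (∑ v : V, spin (σ v)) ≤ -3 := by
        rcases (by omega : 1 ≤ k ∨ k ≤ -2) with h | h
        · left; rw [hk]
          have : (3 : ℤ) ≤ 2 * k + 1 := by omega
          exact_mod_cast this
        · right; rw [hk]
          have : (2 * k + 1 : ℤ) ≤ -3 := by omega
          exact_mod_cast this
      have hzero : gVar E {x} σ f = 0 := by
        apply IsingProof.gVar_singleton_zero
        have hut := IsingProof.sum_update σ x true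
        have huf := IsingProof.sum_update σ x false
        have hsx := IsingProof.spin_cases (σ x)
        have hst : spin true = 1 := by simp [spin]
        have hsf : spin false = -1 := by simp [spin]
        simp only [hf]
        rcases habs with h | h
        · have hpos1 : 0 < ∑ v : V, spin (Function.update σ x true v) := by
            rw [hut, hst]; rcases hsx with hs | hs <;> rw [hs] <;> linarith
          have hpos2 : 0 < ∑ v : V, spin (Function.update σ x false v) := by
            rw [huf, hsf]; rcases hsx with hs | hs <;> rw [hs] <;> linarith
          rw [if_pos hpos1, if_pos hpos2]
        · have hneg1 : ¬ 0 < ∑ v : V, spin (Function.update σ x true v) := by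
            rw [hut, hst]; rcases hsx with hs | hs <;> rw [hs] <;> linarith
          have hneg2 : ¬ 0 < ∑ v : V, spin (Function.update σ x false v) := by
            rw [huf, hsf]; rcases hsx with hs | hs <;> rw [hs] <;> linarith
          rw [if_neg hneg1, if_neg hneg2]
      rw [hzero]
      norm_num
  have hDir : dirich E Finset.univ η f ≤
      ((n : ℝ) + 2) / 2 * gExp E Finset.univ η g1 := by
    have hlin : gExp E Finset.univ η (fun σ => 1 / 4 * (g1 σ + gm1 σ)) =
        1 / 4 * (gExp E Finset.univ η g1 + gExp E Finset.univ η gm1) := by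
      rw [IsingProof.gExp_univ, IsingProof.gExp_univ, IsingProof.gExp_univ]
      have h4 : ∑ σ : V → Bool, Real.exp (E σ) * (1 / 4 * (g1 σ + gm1 σ)) =
          1 / 4 * ((∑ σ : V → Bool, Real.exp (E σ) * g1 σ) +
            ∑ σ : V → Bool, Real.exp (E σ) * gm1 σ) := by
        rw [← Finset.sum_add_distrib, Finset.mul_sum]
        exact Finset.sum_congr rfl fun σ _ => by ring
      rw [h4]
      ring
    have h5 : dirich E Finset.univ η f ≤
        ∑ _x : V, gExp E Finset.univ η (fun σ => 1 / 4 * (g1 σ + gm1 σ)) := by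
      unfold dirich
      exact Finset.sum_le_sum fun x _ => IsingProof.gExp_mono E η (hpoint x)
    rw [Finset.sum_const, Finset.card_univ, ← hn, nsmul_eq_mul, hlin, hsymm] at h5
    nlinarith [hP1, h5]
  refine ⟨hVarf, by rw [hProb]; exact hDir, ?_⟩
  rw [hProb]
  have hdnn : ∀ g : (V → Bool) → ℝ, 0 ≤ dirich E Finset.univ η g := by
    intro g
    unfold dirich
    refine Finset.sum_nonneg fun x _ => ?_
    exact IsingProof.gExp_nonneg E η fun σ => IsingProof.gVar_singleton_nonneg E x σ g
  have hd4 : dirich E Finset.univ η f / gVar E Finset.univ η f =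
      4 * dirich E Finset.univ η f := by
    rw [hVarf]
    field_simp
  have hmem : 4 * dirich E Finset.univ η f ∈
      {r : ℝ | ∃ g : (V → Bool) → ℝ, gVar E Finset.univ η g ≠ 0 ∧
        r = dirich E Finset.univ η g / gVar E Finset.univ η g} :=
    ⟨f, by rw [hVarf]; norm_num, hd4.symm⟩
  have hbdd : ∀ r ∈ {r : ℝ | ∃ g : (V → Bool) → ℝ, gVar E Finset.univ η g ≠ 0 ∧
      r = dirich E Finset.univ η g / gVar E Finset.univ η g}, (0:ℝ) ≤ r := by
    rintro r ⟨g, hgne, rfl⟩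
    exact div_nonneg (hdnn g) (IsingProof.gVar_univ_nonneg E η g)
  have hle : cgap E Finset.univ η ≤ 4 * dirich E Finset.univ η f := by
    unfold cgap
    exact csInf_le ⟨0, hbdd⟩ hmem
  calc cgap E Finset.univ η ≤ 4 * dirich E Finset.univ η f := hle
    _ ≤ 2 * ((n : ℝ) + 2) * gExp E Finset.univ η g1 := by linarith
end
end

section
/- Let B = (V,E) be a finite connected graph with an odd number n of vertices whose edge isoperimetric constant satisfies i_e(B) ≥ ε > 0, let β > 0, and let μ be the free-boundary Ising Gibbs measure on {−1,+1}^V at inverse temperature β with zero external field. Then, with m_B(σ) = Σ_{x∈V} σ_x, one has μ(m_B = 1) ≤ Σ_{(S,T)} e^{−2β|E(S,T)|} ≤ C(n,(n−1)/2) · e^{−βε(n−1)} ≤ 2^n e^{−βε(n−1)}, where the first sum runs over all partitions of V into a set S of (n+1)/2 vertices and a set T of (n−1)/2 vertices, E(S,T) is the set of edges between S and T, and C(n,(n−1)/2) is the binomial coefficient. -/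
/- Common framework: Ising model with boundary conditions on (finite pieces of)
   locally finite graphs, heat-bath Glauber dynamics quantities. -/

open Finset
open scoped Classical

noncomputable section

open IsingGlauber


section Aux17
variable {V : Type} [Fintype V] [DecidableEq V]

lemma my_choose_le_two_pow (n k : ℕ) : n.choose k ≤ 2 ^ n := by
  rcases le_or_gt k n with h | h
  · calc n.choose k ≤ ∑ i ∈ Finset.range (n+1), n.choose i :=
        Finset.single_le_sum (fun i _ => Nat.zero_le _) (Finset.mem_range.2 (by omega))
      _ = 2 ^ n := Nat.sum_range_choose n
  · simp [Nat.choose_eq_zero_of_lt h]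

omit [Fintype V] in
lemma swap_filter_card (G : SimpleGraph V) (A B : Finset V) :
    ((A ×ˢ B).filter fun p => G.Adj p.1 p.2).card =
      ((B ×ˢ A).filter fun p => G.Adj p.1 p.2).card := by
  rw [show ((B ×ˢ A).filter fun p => G.Adj p.1 p.2) =
      ((A ×ˢ B).filter fun p => G.Adj p.1 p.2).image Prod.swap from ?_,
    Finset.card_image_of_injective _ Prod.swap_injective]
  ext ⟨x, y⟩
  simp only [Finset.mem_image, Finset.mem_filter, Finset.mem_product, Prod.exists,
    Prod.swap_prod_mk, Prod.mk.injEq]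
  constructor
  · rintro ⟨⟨hx, hy⟩, h⟩; exact ⟨y, x, ⟨⟨hy, hx⟩, h.symm⟩, rfl, rfl⟩
  · rintro ⟨a, b, ⟨⟨ha, hb⟩, h⟩, rfl, rfl⟩; exact ⟨⟨hb, ha⟩, h.symm⟩

lemma wsum_eq (Ef : (V → Bool) → ℝ) (η : V → Bool) (f : (V → Bool) → ℝ) :
    wsum Ef (Finset.univ : Finset V) η f
      = ∑ S ∈ (Finset.univ : Finset V).powerset,
          Real.exp (Ef fun v => decide (v ∈ S)) * f (fun v => decide (v ∈ S)) := by
  unfold wsum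
  refine Finset.sum_nbij'
    (i := fun p => Finset.univ.filter fun v => p v (Finset.mem_univ v) = true)
    (j := fun S => fun v _ => decide (v ∈ S)) ?_ ?_ ?_ ?_ ?_
  · intro p _; exact Finset.mem_powerset.2 (Finset.filter_subset _ _)
  · intro S _; exact Finset.mem_pi.2 fun a _ => Finset.mem_univ _
  · intro p hp; funext a h; simp
  · intro S _; ext v; simp
  · intro p hp
    have h : patch Finset.univ η p
        = fun v => decide (v ∈ Finset.univ.filter fun v => p v (Finset.mem_univ v) = true) := by
      funext v; simp [patch]
    rw [h]

lemma energy_ind (G : SimpleGraph V) (S : Finset V) :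
    energyF G (Finset.univ : Finset V) (fun v => decide (v ∈ S)) =
      energyF G Finset.univ (fun _ => true)
        - 2 * (((S ×ˢ Sᶜ).filter fun p => G.Adj p.1 p.2).card : ℝ) := by
  have hsum : ∀ τ : V → Bool, energyF G (Finset.univ : Finset V) τ
      = (1/2) * ∑ p ∈ Finset.univ ×ˢ (Finset.univ : Finset V),
          (if G.Adj p.1 p.2 then spin (τ p.1) * spin (τ p.2) else 0) := by
    intro τ
    unfold energyF
    rw [Finset.sum_product]
    congr 1
    refine Finset.sum_congr rfl fun x _ => ?_
    rw [Finset.sum_filter]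
  rw [hsum, hsum]
  have hpt : ∀ p : V × V,
      (if G.Adj p.1 p.2 then spin (decide (p.1 ∈ S)) * spin (decide (p.2 ∈ S)) else 0)
        = (if G.Adj p.1 p.2 then spin true * spin true else 0)
          - ((if p ∈ (Finset.univ ×ˢ Finset.univ).filter
                (fun q : V × V => G.Adj q.1 q.2 ∧ q.1 ∈ S ∧ q.2 ∉ S) then (2:ℝ) else 0)
           + (if p ∈ (Finset.univ ×ˢ Finset.univ).filter
                (fun q : V × V => G.Adj q.1 q.2 ∧ q.1 ∉ S ∧ q.2 ∈ S) then (2:ℝ) else 0)) := by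
    rintro ⟨x, y⟩
    by_cases h : G.Adj x y <;> by_cases hx : x ∈ S <;> by_cases hy : y ∈ S <;>
      simp [spin, h, hx, hy] <;> norm_num
  rw [Finset.sum_congr rfl fun p _ => hpt p, Finset.sum_sub_distrib, Finset.sum_add_distrib]
  have hcard : ∀ t : Finset (V × V),
      (∑ p ∈ Finset.univ ×ˢ (Finset.univ : Finset V), if p ∈ t then (2:ℝ) else 0)
        = 2 * t.card := by
    intro t
    rw [Finset.univ_product_univ, Finset.sum_ite_mem, Finset.univ_inter, Finset.sum_const,
      nsmul_eq_mul, mul_comm]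
  rw [hcard, hcard]
  have h1 : (Finset.univ ×ˢ Finset.univ).filter
      (fun q : V × V => G.Adj q.1 q.2 ∧ q.1 ∈ S ∧ q.2 ∉ S)
      = (S ×ˢ Sᶜ).filter fun p => G.Adj p.1 p.2 := by
    ext ⟨x, y⟩; simp [Finset.mem_filter, Finset.mem_product]; tauto
  have h2 : (Finset.univ ×ˢ Finset.univ).filter
      (fun q : V × V => G.Adj q.1 q.2 ∧ q.1 ∉ S ∧ q.2 ∈ S)
      = (Sᶜ ×ˢ S).filter fun p => G.Adj p.1 p.2 := by
    ext ⟨x, y⟩; simp [Finset.mem_filter, Finset.mem_product]; tauto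
  rw [h1, h2, swap_filter_card G Sᶜ S]
  ring

lemma mag_ind (n : ℕ) (hn : n = Fintype.card V) (S : Finset V) :
    ∑ v : V, spin (decide (v ∈ S)) = 2 * (S.card : ℝ) - (n : ℝ) := by
  have h : ∀ v : V, spin (decide (v ∈ S)) = (if v ∈ S then (2:ℝ) else 0) - 1 := by
    intro v; by_cases hv : v ∈ S <;> simp [spin, hv] <;> norm_num
  rw [Finset.sum_congr rfl fun v _ => h v, Finset.sum_sub_distrib, Finset.sum_ite_mem,
    Finset.univ_inter, Finset.sum_const, Finset.sum_const, Finset.card_univ, ← hn,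
    nsmul_eq_mul, nsmul_eq_mul]
  ring

end Aux17

/-- estimate (5.7)–(5.8) of the paper: on a finite connected graph
with odd `n = |V|` and edge isoperimetric constant at least `ε`, the free-boundary
Ising probability of magnetization `1` is bounded by the Peierls sum over
partitions `(S,T)` with `|S| = (n+1)/2`, which is at most
`C(n,(n-1)/2) e^{-βε(n-1)} ≤ 2^n e^{-βε(n-1)}`. -/
theorem statement17 {V : Type} [Fintype V] [DecidableEq V]
    (G : SimpleGraph V) (hconn : G.Connected)
    (n : ℕ) (hn : n = Fintype.card V) (hodd : Odd n)
    (ε : ℝ) (hε : 0 < ε)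
    (hiso : ∀ S : Finset V, S.Nonempty → 2 * S.card ≤ n →
      ε * (S.card : ℝ) ≤ (((S ×ˢ Sᶜ).filter (fun p => G.Adj p.1 p.2)).card : ℝ))
    (β : ℝ) (hβ : 0 < β) :
    gProb (fun σ => β * energyF G Finset.univ σ) Finset.univ (fun _ => true)
        (fun σ => ∑ v : V, spin (σ v) = 1) ≤
      ∑ S ∈ Finset.powersetCard ((n + 1) / 2) (Finset.univ : Finset V),
        Real.exp (-2 * β * (((S ×ˢ Sᶜ).filter (fun p => G.Adj p.1 p.2)).card : ℝ)) ∧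
    (∑ S ∈ Finset.powersetCard ((n + 1) / 2) (Finset.univ : Finset V),
        Real.exp (-2 * β * (((S ×ˢ Sᶜ).filter (fun p => G.Adj p.1 p.2)).card : ℝ))) ≤
      (n.choose ((n - 1) / 2) : ℝ) * Real.exp (-β * ε * ((n : ℝ) - 1)) ∧
    (n.choose ((n - 1) / 2) : ℝ) * Real.exp (-β * ε * ((n : ℝ) - 1)) ≤
      2 ^ n * Real.exp (-β * ε * ((n : ℝ) - 1)) := by
  classical
  obtain ⟨m, hm⟩ := hodd
  have hB : ∀ S ∈ Finset.powersetCard ((n + 1) / 2) (Finset.univ : Finset V),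
      ε * ((n:ℝ) - 1) ≤ 2 * (((S ×ˢ Sᶜ).filter (fun p => G.Adj p.1 p.2)).card : ℝ) := by
    intro S hS
    rw [Finset.mem_powersetCard] at hS
    have hcardS : S.card = (n + 1) / 2 := hS.2
    have hcompl : Sᶜ.card = m := by
      rw [Finset.card_compl, hcardS, ← hn]; omega
    by_cases hm0 : m = 0
    · have hzero : (n:ℝ) - 1 = 0 := by
        rw [hm, hm0]; push_cast; ring
      rw [hzero, mul_zero]
      positivity
    · have hne : Sᶜ.Nonempty := Finset.card_pos.1 (by omega)
      have h2 : 2 * Sᶜ.card ≤ n := by omega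
      have hiso' := hiso Sᶜ hne h2
      rw [compl_compl] at hiso'
      have hswap : ((((Sᶜ : Finset V) ×ˢ S).filter (fun p => G.Adj p.1 p.2)).card : ℝ)
          = (((S ×ˢ Sᶜ).filter (fun p => G.Adj p.1 p.2)).card : ℝ) := by
        exact_mod_cast congrArg Nat.cast (swap_filter_card G Sᶜ S)
      rw [hswap, hcompl] at hiso'
      have hn' : (n:ℝ) = 2 * (m:ℝ) + 1 := by rw [hm]; push_cast; ring
      nlinarith [hiso']
  have part2 : (∑ S ∈ Finset.powersetCard ((n + 1) / 2) (Finset.univ : Finset V),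
        Real.exp (-2 * β * (((S ×ˢ Sᶜ).filter (fun p => G.Adj p.1 p.2)).card : ℝ))) ≤
      (n.choose ((n - 1) / 2) : ℝ) * Real.exp (-β * ε * ((n : ℝ) - 1)) := by
    have hterm : ∀ S ∈ Finset.powersetCard ((n + 1) / 2) (Finset.univ : Finset V),
        Real.exp (-2 * β * (((S ×ˢ Sᶜ).filter (fun p => G.Adj p.1 p.2)).card : ℝ))
          ≤ Real.exp (-β * ε * ((n : ℝ) - 1)) := by
      intro S hS
      apply Real.exp_le_exp.2
      have h := hB S hS
      nlinarith [hβ]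
    calc (∑ S ∈ Finset.powersetCard ((n + 1) / 2) (Finset.univ : Finset V),
          Real.exp (-2 * β * (((S ×ˢ Sᶜ).filter (fun p => G.Adj p.1 p.2)).card : ℝ)))
        ≤ (Finset.powersetCard ((n + 1) / 2) (Finset.univ : Finset V)).card
            • Real.exp (-β * ε * ((n : ℝ) - 1)) := Finset.sum_le_card_nsmul _ _ _ hterm
      _ = (n.choose ((n - 1) / 2) : ℝ) * Real.exp (-β * ε * ((n : ℝ) - 1)) := by
          rw [Finset.card_powersetCard, Finset.card_univ, ← hn, nsmul_eq_mul]
          congr 2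
          have h1 : (n - 1) / 2 = n - (n + 1) / 2 := by omega
          rw [h1, Nat.choose_symm (by omega : (n + 1) / 2 ≤ n)]
  refine ⟨?_, part2, ?_⟩
  · unfold gProb gExp
    rw [wsum_eq, wsum_eq]
    beta_reduce
    simp only [mul_one]
    have huniv : (fun v => decide (v ∈ (Finset.univ : Finset V))) = (fun _ : V => true) := by
      funext v; simp
    have hZ : Real.exp (β * energyF G Finset.univ (fun _ : V => true))
        ≤ ∑ S ∈ (Finset.univ : Finset V).powerset,
            Real.exp (β * energyF G Finset.univ fun v => decide (v ∈ S)) := by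
      have hmem : (Finset.univ : Finset V) ∈ (Finset.univ : Finset V).powerset :=
        Finset.mem_powerset_self _
      calc Real.exp (β * energyF G Finset.univ (fun _ : V => true))
          = Real.exp (β * energyF G Finset.univ fun v => decide (v ∈ (Finset.univ : Finset V))) := by
            rw [huniv]
        _ ≤ _ := Finset.single_le_sum
            (f := fun S => Real.exp (β * energyF G Finset.univ fun v => decide (v ∈ S)))
            (fun S _ => (Real.exp_pos _).le) hmem
    have hZpos : 0 < ∑ S ∈ (Finset.univ : Finset V).powerset,
        Real.exp (β * energyF G Finset.univ fun v => decide (v ∈ S)) :=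
      lt_of_lt_of_le (Real.exp_pos _) hZ
    rw [div_le_iff₀ hZpos]
    have hR0nonneg : 0 ≤ ∑ S ∈ Finset.powersetCard ((n + 1) / 2) (Finset.univ : Finset V),
        Real.exp (-2 * β * (((S ×ˢ Sᶜ).filter (fun p => G.Adj p.1 p.2)).card : ℝ)) :=
      Finset.sum_nonneg fun S _ => (Real.exp_pos _).le
    refine le_trans (le_of_eq ?_)
      (?_ : Real.exp (β * energyF G Finset.univ (fun _ : V => true)) *
          (∑ S ∈ Finset.powersetCard ((n + 1) / 2) (Finset.univ : Finset V),
            Real.exp (-2 * β * (((S ×ˢ Sᶜ).filter (fun p => G.Adj p.1 p.2)).card : ℝ))) ≤ _)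
    · rw [Finset.powersetCard_eq_filter, Finset.sum_filter, Finset.mul_sum]
      refine Finset.sum_congr rfl fun S hS => ?_
      have hcond : ((∑ v : V, spin (decide (v ∈ S))) = 1) ↔ S.card = (n + 1) / 2 := by
        rw [mag_ind n hn S]
        constructor
        · intro h
          have h2 : (2 * S.card : ℝ) = (n:ℝ) + 1 := by push_cast; linarith
          have h3 : 2 * S.card = n + 1 := by exact_mod_cast h2
          omega
        · intro h
          have h3 : 2 * S.card = n + 1 := by omega
          have h4 : (2 * S.card : ℝ) = (n:ℝ) + 1 := by exact_mod_cast h3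
          push_cast at h4 ⊢; linarith
      rw [energy_ind, if_congr hcond rfl rfl]
      by_cases hc : S.card = (n + 1) / 2
      · simp only [if_pos hc, mul_one]
        rw [← Real.exp_add]
        congr 1
        ring
      · simp only [if_neg hc, mul_zero]
    · calc Real.exp (β * energyF G Finset.univ (fun _ : V => true)) *
            (∑ S ∈ Finset.powersetCard ((n + 1) / 2) (Finset.univ : Finset V),
              Real.exp (-2 * β * (((S ×ˢ Sᶜ).filter (fun p => G.Adj p.1 p.2)).card : ℝ)))
          ≤ (∑ S ∈ (Finset.univ : Finset V).powerset,
              Real.exp (β * energyF G Finset.univ fun v => decide (v ∈ S))) *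
            (∑ S ∈ Finset.powersetCard ((n + 1) / 2) (Finset.univ : Finset V),
              Real.exp (-2 * β * (((S ×ˢ Sᶜ).filter (fun p => G.Adj p.1 p.2)).card : ℝ))) :=
            mul_le_mul_of_nonneg_right hZ hR0nonneg
        _ = _ := mul_comm _ _
  · have h := my_choose_le_two_pow n ((n - 1) / 2)
    have h' : (n.choose ((n - 1) / 2) : ℝ) ≤ 2 ^ n := by exact_mod_cast h
    exact mul_le_mul_of_nonneg_right h' (Real.exp_pos _).le
end
end

section
/- Let B = (V,E) be a finite connected graph with an odd number n of vertices whose edge isoperimetric constant satisfies i_e(B) ≥ ε > 0, and let μ be the free-boundary Ising Gibbs measure on {−1,+1}^V at inverse temperature β with zero external field. Then the spectral gap of the heat-bath Glauber dynamics satisfies c_gap(μ) ≤ 2(n+2) · 2^n · e^{−βε(n−1)}; in particular, for every β > (log 2)/ε there exists θ = θ(β,ε) > 0 such that c_gap(μ) ≤ e^{−θ n} for all sufficiently large n. -/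
/- Common framework: Ising model with boundary conditions on (finite pieces of)
   locally finite graphs, heat-bath Glauber dynamics quantities. -/

open Finset
open scoped Classical

noncomputable section

open IsingGlauber
namespace IsingGlauber

variable {V : Type} [Fintype V] [DecidableEq V]

lemma patch_self (A : Finset V) (η : V → Bool) (σ : V → Bool) :
    patch A η (fun v _ => σ v) = fun v => if v ∈ A then σ v else η v := by
  funext v; simp [patch]

lemma wsum_univ (E : (V → Bool) → ℝ) (η : V → Bool) (f : (V → Bool) → ℝ) :
    wsum E Finset.univ η f = ∑ σ : V → Bool, Real.exp (E σ) * f σ := by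
  unfold wsum
  refine Finset.sum_nbij' (i := fun p => patch Finset.univ η p)
    (j := fun σ => fun v _ => σ v) ?_ ?_ ?_ ?_ ?_
  · intro a _; exact Finset.mem_univ _
  · intro σ _; simp [Finset.mem_pi]
  · intro p hp
    funext v hv
    simp [patch]
  · intro σ _
    funext v
    simp [patch]
  · intro p _; rfl

lemma patch_singleton (x : V) (η : V → Bool) (b : Bool) :
    patch {x} η (fun _ _ => b) = Function.update η x b := by
  funext v
  by_cases h : v = x
  · subst h; simp [patch]
  · simp [patch, h, Function.update_of_ne h]

lemma wsum_singleton (E : (V → Bool) → ℝ) (x : V) (η : V → Bool) (f : (V → Bool) → ℝ) :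
    wsum E {x} η f =
      ∑ b : Bool, Real.exp (E (Function.update η x b)) * f (Function.update η x b) := by
  unfold wsum
  refine Finset.sum_nbij' (i := fun p => p x (Finset.mem_singleton_self x))
    (j := fun b => fun _ _ => b) ?_ ?_ ?_ ?_ ?_
  · intro a _; exact Finset.mem_univ _
  · intro b _; simp [Finset.mem_pi]
  · intro p hp
    funext v hv
    have : v = x := Finset.mem_singleton.mp hv
    subst this; rfl
  · intro b _; rfl
  · intro p hp
    have : patch {x} η p = Function.update η x (p x (Finset.mem_singleton_self x)) := by
      funext v
      by_cases h : v = x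
      · subst h; simp [patch]
      · simp [patch, h, Function.update_of_ne h]
    rw [this]

end IsingGlauber
set_option linter.unusedSectionVars false

namespace IsingGlauber

variable {V : Type} [Fintype V] [DecidableEq V]

lemma wsum_one_pos (E : (V → Bool) → ℝ) (A : Finset V) (η : V → Bool) :
    0 < wsum E A η (fun _ => 1) := by
  unfold wsum
  refine Finset.sum_pos (fun p _ => by positivity) ?_
  exact ⟨fun v _ => true, by simp [Finset.mem_pi]⟩

lemma wsum_add (E : (V → Bool) → ℝ) (A : Finset V) (η : V → Bool) (f g : (V → Bool) → ℝ) :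
    wsum E A η (fun σ => f σ + g σ) = wsum E A η f + wsum E A η g := by
  unfold wsum; rw [← Finset.sum_add_distrib]; exact Finset.sum_congr rfl (by intros; ring)

lemma wsum_smul (E : (V → Bool) → ℝ) (A : Finset V) (η : V → Bool) (c : ℝ)
    (f : (V → Bool) → ℝ) :
    wsum E A η (fun σ => c * f σ) = c * wsum E A η f := by
  unfold wsum; rw [Finset.mul_sum]; exact Finset.sum_congr rfl (by intros; ring)

lemma wsum_mono (E : (V → Bool) → ℝ) (A : Finset V) (η : V → Bool) (f g : (V → Bool) → ℝ)
    (h : ∀ σ, f σ ≤ g σ) : wsum E A η f ≤ wsum E A η g := by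
  unfold wsum
  exact Finset.sum_le_sum fun p _ =>
    mul_le_mul_of_nonneg_left (h _) (Real.exp_nonneg _)

lemma wsum_nonneg (E : (V → Bool) → ℝ) (A : Finset V) (η : V → Bool) (f : (V → Bool) → ℝ)
    (h : ∀ σ, 0 ≤ f σ) : 0 ≤ wsum E A η f := by
  have := wsum_mono E A η (fun _ => 0) f (fun σ => h σ)
  simpa [wsum] using this

lemma gExp_nonneg (E : (V → Bool) → ℝ) (A : Finset V) (η : V → Bool) (f : (V → Bool) → ℝ)
    (h : ∀ σ, 0 ≤ f σ) : 0 ≤ gExp E A η f :=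
  div_nonneg (wsum_nonneg E A η f h) (wsum_one_pos E A η).le

lemma gExp_mono (E : (V → Bool) → ℝ) (A : Finset V) (η : V → Bool) (f g : (V → Bool) → ℝ)
    (h : ∀ σ, f σ ≤ g σ) : gExp E A η f ≤ gExp E A η g := by
  unfold gExp
  have := wsum_one_pos E A η
  gcongr
  exact wsum_mono E A η f g h

lemma gExp_add (E : (V → Bool) → ℝ) (A : Finset V) (η : V → Bool) (f g : (V → Bool) → ℝ) :
    gExp E A η (fun σ => f σ + g σ) = gExp E A η f + gExp E A η g := by
  unfold gExp; rw [wsum_add, add_div]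

lemma gExp_smul (E : (V → Bool) → ℝ) (A : Finset V) (η : V → Bool) (c : ℝ)
    (f : (V → Bool) → ℝ) :
    gExp E A η (fun σ => c * f σ) = c * gExp E A η f := by
  unfold gExp; rw [wsum_smul, mul_div_assoc]

lemma gExp_const (E : (V → Bool) → ℝ) (A : Finset V) (η : V → Bool) (c : ℝ) :
    gExp E A η (fun _ => c) = c := by
  unfold gExp
  rw [show (fun (_ : V → Bool) => c) = (fun σ => c * (fun _ => (1:ℝ)) σ) by funext; ring,
    wsum_smul]
  field_simp [(wsum_one_pos E A η).ne']

lemma gExp_congr (E : (V → Bool) → ℝ) (A : Finset V) (η : V → Bool) (f g : (V → Bool) → ℝ)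
    (h : ∀ σ, f σ = g σ) : gExp E A η f = gExp E A η g := by
  have : f = g := funext h
  rw [this]

lemma gVar_eq (E : (V → Bool) → ℝ) (A : Finset V) (η : V → Bool) (f : (V → Bool) → ℝ) :
    gVar E A η f = gExp E A η (fun σ => (f σ - gExp E A η f) ^ 2) := by
  set c := gExp E A η f with hc
  have h1 : ∀ σ : V → Bool, (f σ - c)^2 = f σ ^ 2 + ((-2*c) * f σ + c^2 * 1) := by
    intro σ; ring
  rw [gExp_congr E A η _ _ h1, gExp_add, gExp_add,
    gExp_smul, gExp_smul, gExp_const]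
  unfold gVar
  rw [← hc]; ring

lemma gVar_nonneg (E : (V → Bool) → ℝ) (A : Finset V) (η : V → Bool) (f : (V → Bool) → ℝ) :
    0 ≤ gVar E A η f := by
  rw [gVar_eq]
  exact gExp_nonneg _ _ _ _ fun σ => sq_nonneg _

lemma dirich_nonneg (E : (V → Bool) → ℝ) (A : Finset V) (η : V → Bool) (f : (V → Bool) → ℝ) :
    0 ≤ dirich E A η f :=
  Finset.sum_nonneg fun x _ => gExp_nonneg _ _ _ _ fun σ => gVar_nonneg _ _ _ _

end IsingGlauber
namespace IsingGlauber

variable {V : Type} [Fintype V] [DecidableEq V]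

lemma gVar_singleton_le (E : (V → Bool) → ℝ) (x : V) (η : V → Bool) (f : (V → Bool) → ℝ) :
    gVar E {x} η f ≤
      (1/4) * (f (Function.update η x true) - f (Function.update η x false))^2 := by
  set a := f (Function.update η x true) with ha
  set b := f (Function.update η x false) with hb
  set wa := Real.exp (E (Function.update η x true)) with hwa
  set wb := Real.exp (E (Function.update η x false)) with hwb
  have hwa0 : 0 < wa := Real.exp_pos _
  have hwb0 : 0 < wb := Real.exp_pos _
  have hZ : wsum E {x} η (fun _ => 1) = wa + wb := by
    rw [wsum_singleton]; simp [Fintype.sum_bool]; rfl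
  have hF : wsum E {x} η f = wa * a + wb * b := by
    rw [wsum_singleton]; simp [Fintype.sum_bool]; rfl
  have hF2 : wsum E {x} η (fun σ => f σ ^ 2) = wa * a^2 + wb * b^2 := by
    rw [wsum_singleton]; simp [Fintype.sum_bool]; rfl
  have hs : (0:ℝ) < wa + wb := by linarith
  unfold gVar gExp
  rw [hZ, hF, hF2]
  have key : (wa*a^2 + wb*b^2)/(wa+wb) - ((wa*a + wb*b)/(wa+wb))^2
      = wa*wb*(a-b)^2/(wa+wb)^2 := by
    field_simp
    ring
  rw [key, div_le_iff₀ (by positivity)]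
  nlinarith [sq_nonneg (wa - wb), sq_nonneg (a - b), sq_nonneg ((wa-wb)*(a-b))]

/-- Total magnetisation as an integer. -/
def mag (σ : V → Bool) : ℤ := ∑ v : V, (if σ v then 1 else -1)

lemma mag_eq_card_false (σ : V → Bool) :
    mag σ = (Fintype.card V : ℤ)
      - 2 * ((Finset.univ.filter fun v => σ v = false).card : ℤ) := by
  unfold mag
  have : ∀ v : V, (if σ v then (1:ℤ) else -1)
      = 1 - 2 * (if σ v = false then (1:ℤ) else 0) := by
    intro v; cases h : σ v <;> simp
  rw [Finset.sum_congr rfl fun v _ => this v, Finset.sum_sub_distrib, ← Finset.mul_sum,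
    Finset.sum_boole]
  simp [Finset.card_univ]

lemma mag_eq_card_true (σ : V → Bool) :
    mag σ = 2 * ((Finset.univ.filter fun v => σ v = true).card : ℤ)
      - (Fintype.card V : ℤ) := by
  unfold mag
  have : ∀ v : V, (if σ v then (1:ℤ) else -1)
      = 2 * (if σ v = true then (1:ℤ) else 0) - 1 := by
    intro v; cases h : σ v <;> simp
  rw [Finset.sum_congr rfl fun v _ => this v, Finset.sum_sub_distrib, ← Finset.mul_sum,
    Finset.sum_boole]
  simp [Finset.card_univ]

lemma mag_ne_zero (hodd : Odd (Fintype.card V)) (σ : V → Bool) : mag σ ≠ 0 := by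
  have h := mag_eq_card_false σ
  intro h0
  rw [h0] at h
  obtain ⟨k, hk⟩ := hodd
  omega

lemma mag_update_flip (σ : V → Bool) (x : V) :
    mag (Function.update σ x true) = mag (Function.update σ x false) + 2 := by
  unfold mag
  have h1 : ∀ c : Bool, (fun v => if (Function.update σ x c) v then (1:ℤ) else -1)
      = Function.update (fun v => if σ v then (1:ℤ) else -1) x (if c then 1 else -1) := by
    intro c; funext v
    by_cases h : v = x
    · subst h; simp
    · simp [Function.update_of_ne h]
  rw [show (∑ v : V, if (Function.update σ x true) v then (1:ℤ) else -1)
      = ∑ v : V, Function.update (fun v => if σ v then (1:ℤ) else -1) x 1 v by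
        refine Finset.sum_congr rfl fun v _ => ?_
        simpa using congrFun (h1 true) v,
    show (∑ v : V, if (Function.update σ x false) v then (1:ℤ) else -1)
      = ∑ v : V, Function.update (fun v => if σ v then (1:ℤ) else -1) x (-1) v by
        refine Finset.sum_congr rfl fun v _ => ?_
        simpa using congrFun (h1 false) v]
  rw [Finset.sum_update_of_mem (Finset.mem_univ x),
    Finset.sum_update_of_mem (Finset.mem_univ x)]
  ring

lemma mag_update_self (σ : V → Bool) (x : V) :
    mag (Function.update σ x (σ x)) = mag σ := by
  rw [Function.update_eq_self]

end IsingGlauber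
namespace IsingGlauber

variable {V : Type} [Fintype V] [DecidableEq V]

/-- Ordered adjacent pairs. -/
def adjPairs (G : SimpleGraph V) : Finset (V × V) :=
  (Finset.univ ×ˢ Finset.univ).filter fun p => G.Adj p.1 p.2

lemma energyF_univ_eq (G : SimpleGraph V) (σ : V → Bool) :
    energyF G Finset.univ σ = ((adjPairs G).card : ℝ) / 2
      - (((adjPairs G).filter fun p => σ p.1 ≠ σ p.2).card : ℝ) := by
  unfold energyF
  have h1 : ∑ x : V, ∑ y ∈ Finset.univ.filter (fun y => G.Adj x y),
      spin (σ x) * spin (σ y)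
      = ∑ p ∈ adjPairs G, spin (σ p.1) * spin (σ p.2) := by
    unfold adjPairs
    rw [Finset.sum_filter, Finset.sum_product]
    exact Finset.sum_congr rfl fun x _ => by rw [Finset.sum_filter]
  rw [h1]
  have h2 : ∀ p : V × V, spin (σ p.1) * spin (σ p.2)
      = 1 - 2 * (if σ p.1 ≠ σ p.2 then (1:ℝ) else 0) := by
    intro p; cases h : σ p.1 <;> cases h' : σ p.2 <;> simp [spin, h, h'] <;> norm_num
  rw [Finset.sum_congr rfl fun p _ => h2 p, Finset.sum_sub_distrib, ← Finset.mul_sum,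
    Finset.sum_boole, Finset.sum_const, nsmul_eq_mul, mul_one]
  push_cast
  ring

lemma card_swap_pairs (G : SimpleGraph V) (S : Finset V) :
    ((Sᶜ ×ˢ S).filter fun p => G.Adj p.1 p.2).card
      = ((S ×ˢ Sᶜ).filter fun p => G.Adj p.1 p.2).card := by
  refine Finset.card_bij' (fun p _ => Prod.swap p) (fun p _ => Prod.swap p) ?_ ?_ ?_ ?_
  · intro p hp
    simp only [Finset.mem_filter, Finset.mem_product] at hp ⊢
    exact ⟨⟨hp.1.2, hp.1.1⟩, hp.2.symm⟩
  · intro p hp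
    simp only [Finset.mem_filter, Finset.mem_product] at hp ⊢
    exact ⟨⟨hp.1.2, hp.1.1⟩, hp.2.symm⟩
  · intro p _; simp
  · intro p _; simp

/-- Disagreement pairs dominate twice one-sided boundary. -/
lemma disagree_card (G : SimpleGraph V) (σ : V → Bool) (c : Bool)
    (S : Finset V) (hS : S = Finset.univ.filter fun v => σ v = c) :
    2 * ((S ×ˢ Sᶜ).filter fun p => G.Adj p.1 p.2).card
      ≤ ((adjPairs G).filter fun p => σ p.1 ≠ σ p.2).card := by
  have hmemS : ∀ v, v ∈ S ↔ σ v = c := by intro v; simp [hS]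
  have hsub : ((S ×ˢ Sᶜ).filter fun p => G.Adj p.1 p.2)
      ∪ ((Sᶜ ×ˢ S).filter fun p => G.Adj p.1 p.2)
      ⊆ (adjPairs G).filter fun p => σ p.1 ≠ σ p.2 := by
    intro p hp
    rcases Finset.mem_union.mp hp with h | h <;>
    · simp only [Finset.mem_filter, Finset.mem_product, Finset.mem_compl] at h
      simp only [Finset.mem_filter, adjPairs, Finset.mem_product, Finset.mem_univ,
        true_and, and_true]
      refine ⟨h.2, ?_⟩
      have h1 := h.1.1
      have h2 := h.1.2
      intro hEq
      first
      | exact h2 ((hmemS _).mpr (hEq ▸ (hmemS _).mp h1))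
      | exact h1 ((hmemS _).mpr (hEq ▸ (hmemS _).mp h2))
  have hdisj : Disjoint ((S ×ˢ Sᶜ).filter fun p => G.Adj p.1 p.2)
      ((Sᶜ ×ˢ S).filter fun p => G.Adj p.1 p.2) := by
    refine Finset.disjoint_left.mpr fun p hp hq => ?_
    simp only [Finset.mem_filter, Finset.mem_product, Finset.mem_compl] at hp hq
    exact hq.1.1 hp.1.1
  calc 2 * ((S ×ˢ Sᶜ).filter fun p => G.Adj p.1 p.2).card
      = ((S ×ˢ Sᶜ).filter fun p => G.Adj p.1 p.2).card
        + ((Sᶜ ×ˢ S).filter fun p => G.Adj p.1 p.2).card := by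
        rw [card_swap_pairs]; ring
    _ = (((S ×ˢ Sᶜ).filter fun p => G.Adj p.1 p.2)
        ∪ ((Sᶜ ×ˢ S).filter fun p => G.Adj p.1 p.2)).card := by
        rw [Finset.card_union_of_disjoint hdisj]
    _ ≤ _ := Finset.card_le_card hsub

end IsingGlauber
namespace IsingGlauber

variable {V : Type} [Fintype V] [DecidableEq V]

lemma mag_flip (σ : V → Bool) : mag (fun v => !(σ v)) = - mag σ := by
  unfold mag
  rw [← Finset.sum_neg_distrib]
  refine Finset.sum_congr rfl fun v _ => ?_
  cases h : σ v <;> simp [h]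

lemma energyF_flip (G : SimpleGraph V) (σ : V → Bool) :
    energyF G Finset.univ (fun v => !(σ v)) = energyF G Finset.univ σ := by
  rw [energyF_univ_eq, energyF_univ_eq]
  have : ((adjPairs G).filter fun p => (fun v => !(σ v)) p.1 ≠ (fun v => !(σ v)) p.2)
      = (adjPairs G).filter fun p => σ p.1 ≠ σ p.2 := by
    refine Finset.filter_congr fun p _ => ?_
    simp
  rw [this]

lemma core_bound (ε : ℝ) (hε : 0 < ε) (G : SimpleGraph V)
    (hodd : Odd (Fintype.card V))
    (hiso : ∀ S : Finset V, S.Nonempty → 2 * S.card ≤ Fintype.card V →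
        ε * (S.card : ℝ) ≤ (((S ×ˢ Sᶜ).filter (fun p => G.Adj p.1 p.2)).card : ℝ))
    (β : ℝ) (hβ : 0 < β) :
    cgap (fun σ => β * energyF G Finset.univ σ) Finset.univ (fun _ => true) ≤
      2 * ((Fintype.card V : ℝ) + 2) * 2 ^ Fintype.card V *
        Real.exp (-β * ε * ((Fintype.card V : ℝ) - 1)) := by
  classical
  set n := Fintype.card V with hn
  have hn1 : 1 ≤ n := by
    rcases hodd with ⟨k, hk⟩; omega
  set E0 : (V → Bool) → ℝ := fun σ => β * energyF G Finset.univ σ with hE0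
  set η : V → Bool := fun _ => true with hη
  set f0 : (V → Bool) → ℝ := fun σ => if 0 < mag σ then 1 else 0 with hf0
  set D : (V → Bool) → ℝ := fun σ => if mag σ = 1 ∨ mag σ = -1 then 1 else 0 with hD
  have hD01 : ∀ σ, D σ = 0 ∨ D σ = 1 := by
    intro σ; by_cases h : mag σ = 1 ∨ mag σ = -1 <;> simp [hD, h]
  -- Step 1 : variance of f0 is 1/4
  have hflip_invol : Function.Involutive (fun σ : V → Bool => fun v => !(σ v)) := by
    intro σ; funext v; simp
  have hEflip : ∀ σ, E0 (fun v => !(σ v)) = E0 σ := by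
    intro σ
    simp only [hE0]
    rw [energyF_flip]
  have key : wsum E0 Finset.univ η (fun _ => 1) = 2 * wsum E0 Finset.univ η f0 := by
    rw [wsum_univ, wsum_univ]
    have reindex : ∑ σ : V → Bool, Real.exp (E0 σ) * f0 σ
        = ∑ σ : V → Bool, Real.exp (E0 σ) * (if mag σ < 0 then 1 else 0) := by
      rw [← Function.Bijective.sum_comp hflip_invol.bijective
        (fun σ => Real.exp (E0 σ) * f0 σ)]
      refine Finset.sum_congr rfl fun σ _ => ?_
      rw [hEflip]
      congr 1
      show (if 0 < mag (fun v => !(σ v)) then (1:ℝ) else 0) = _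
      rw [mag_flip]
      by_cases h : mag σ < 0 <;> simp [h, neg_pos]
    have split : ∀ σ : V → Bool, Real.exp (E0 σ) * 1
        = Real.exp (E0 σ) * f0 σ + Real.exp (E0 σ) * (if mag σ < 0 then 1 else 0) := by
      intro σ
      have hne := mag_ne_zero (hn ▸ hodd) σ
      rcases lt_trichotomy (mag σ) 0 with h | h | h
      · simp [hf0, h, not_lt.mpr h.le, lt_asymm h]
      · exact absurd h hne
      · simp [hf0, h, not_lt.mpr h.le]
    rw [Finset.sum_congr rfl fun σ _ => split σ, Finset.sum_add_distrib, ← reindex]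
    ring
  have hZpos := wsum_one_pos E0 Finset.univ η
  have hWp_pos : 0 < wsum E0 Finset.univ η f0 := by
    rw [key] at hZpos; linarith
  have hgExp : gExp E0 Finset.univ η f0 = 1/2 := by
    unfold gExp
    rw [key]
    field_simp
  have hsq : (fun σ => f0 σ ^ 2) = f0 := by
    funext σ
    by_cases h : 0 < mag σ <;> simp [hf0, h]
  have hVar : gVar E0 Finset.univ η f0 = 1/4 := by
    unfold gVar
    rw [hsq, hgExp]
    norm_num
  -- Step 2 : single-site variance bound
  have hsite : ∀ (x : V) (σ : V → Bool),
      gVar E0 {x} σ f0 ≤ (1/4) * D σ := by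
    intro x σ
    have h := gVar_singleton_le E0 x σ f0
    by_cases hc : mag σ = 1 ∨ mag σ = -1
    · have h1 : (f0 (Function.update σ x true) - f0 (Function.update σ x false))^2 ≤ 1 := by
        by_cases ha : 0 < mag (Function.update σ x true) <;>
        by_cases hb : 0 < mag (Function.update σ x false) <;>
          simp [hf0, ha, hb] <;> norm_num
      calc gVar E0 {x} σ f0 ≤ (1/4) * (f0 (Function.update σ x true)
            - f0 (Function.update σ x false))^2 := h
        _ ≤ (1/4) * 1 := by linarith
        _ = (1/4) * D σ := by simp [hD, hc]
    · have heq : f0 (Function.update σ x true) = f0 (Function.update σ x false) := by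
        by_contra hne
        have hm := mag_update_flip σ x
        have hodd' := hn ▸ hodd
        have hat : mag (Function.update σ x true) ≠ 0 := mag_ne_zero hodd' _
        have haf : mag (Function.update σ x false) ≠ 0 := mag_ne_zero hodd' _
        have : mag (Function.update σ x true) = 1 ∧ mag (Function.update σ x false) = -1 := by
          by_cases ha : 0 < mag (Function.update σ x true) <;>
          by_cases hb : 0 < mag (Function.update σ x false)
          · exact absurd (by simp [hf0, ha, hb]) hne
          · omega
          · omega
          · exact absurd (by simp [hf0, ha, hb]) hne
        obtain ⟨h1, h2⟩ := this
        refine hc ?_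
        have hself := congrArg mag (Function.update_eq_self x σ)
        cases hx : σ x
        · rw [hx] at hself; right; omega
        · rw [hx] at hself; left; omega
      rw [heq] at h
      simp at h
      have : (0:ℝ) ≤ D σ := by rcases hD01 σ with h0 | h0 <;> rw [h0] <;> norm_num
      linarith
  -- Step 3 : energy estimate for configurations with |mag| = 1
  have henergy : ∀ σ : V → Bool, (mag σ = 1 ∨ mag σ = -1) →
      energyF G Finset.univ σ ≤ energyF G Finset.univ η - ε * ((n:ℝ) - 1) := by
    intro σ hσ
    obtain ⟨S, c, hSdef, hScard⟩ :
        ∃ (S : Finset V) (c : Bool), S = Finset.univ.filter (fun v => σ v = c)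
          ∧ 2 * S.card = n - 1 := by
      rcases hσ with h1 | h1
      · refine ⟨Finset.univ.filter (fun v => σ v = false), false, rfl, ?_⟩
        have h2 := mag_eq_card_false σ
        rw [h1, ← hn] at h2
        omega
      · refine ⟨Finset.univ.filter (fun v => σ v = true), true, rfl, ?_⟩
        have h2 := mag_eq_card_true σ
        rw [h1, ← hn] at h2
        omega
    have hbd : ε * ((n:ℝ) - 1)
        ≤ (((adjPairs G).filter fun p => σ p.1 ≠ σ p.2).card : ℝ) := by
      have h2 := disagree_card G σ c S hSdef
      have hreal : ((n:ℝ) - 1) = 2 * (S.card : ℝ) := by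
        have : ((2 * S.card : ℕ) : ℝ) = ((n - 1 : ℕ) : ℝ) := by rw [hScard]
        push_cast [Nat.cast_sub hn1] at this
        linarith
      by_cases hSne : S.Nonempty
      · have h3 := hiso S hSne (by omega)
        have h2' : (2 * ((S ×ˢ Sᶜ).filter fun p => G.Adj p.1 p.2).card : ℝ)
            ≤ (((adjPairs G).filter fun p => σ p.1 ≠ σ p.2).card : ℝ) := by
          exact_mod_cast h2
        push_cast at h2'
        rw [hreal]
        nlinarith
      · have hS0 : S.card = 0 := by
          simp [Finset.not_nonempty_iff_eq_empty.mp hSne]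
        rw [hreal, hS0]
        simp
    rw [energyF_univ_eq G σ, energyF_univ_eq G η]
    have hηdis : ((adjPairs G).filter fun p => η p.1 ≠ η p.2) = ∅ := by
      simp [hη]
    rw [hηdis]
    simp only [Finset.card_empty, Nat.cast_zero, sub_zero]
    linarith
  -- Step 4 : probability that |mag| = 1 is exponentially small
  set Eg : ℝ := energyF G Finset.univ η with hEg
  have hPr : gExp E0 Finset.univ η D ≤ 2^n * Real.exp (-β*ε*((n:ℝ)-1)) := by
    have hnum : wsum E0 Finset.univ η D
        ≤ 2^n * Real.exp (β*Eg - β*ε*((n:ℝ)-1)) := by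
      rw [wsum_univ]
      calc ∑ σ : V → Bool, Real.exp (E0 σ) * D σ
          ≤ ∑ _σ : V → Bool, Real.exp (β*Eg - β*ε*((n:ℝ)-1)) := by
            refine Finset.sum_le_sum fun σ _ => ?_
            rcases hD01 σ with h0 | h0
            · rw [h0, mul_zero]; positivity
            · rw [h0, mul_one]
              apply Real.exp_le_exp.mpr
              have hcond : mag σ = 1 ∨ mag σ = -1 := by
                by_contra hcc
                simp [hD, hcc] at h0
              have hEn := henergy σ hcond
              simp only [hE0]
              nlinarith
        _ = 2^n * Real.exp (β*Eg - β*ε*((n:ℝ)-1)) := by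
            rw [Finset.sum_const, Finset.card_univ, Fintype.card_fun]
            simp [hn]
    have hden : Real.exp (β * Eg) ≤ wsum E0 Finset.univ η (fun _ => 1) := by
      rw [wsum_univ]
      calc Real.exp (β*Eg) = Real.exp (E0 η) * 1 := by simp [hE0, hEg]
        _ ≤ ∑ σ : V → Bool, Real.exp (E0 σ) * 1 :=
          Finset.single_le_sum (f := fun σ : V → Bool => Real.exp (E0 σ) * 1)
            (fun σ _ => by positivity) (Finset.mem_univ η)
    unfold gExp
    calc wsum E0 Finset.univ η D / wsum E0 Finset.univ η (fun _ => 1)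
        ≤ (2^n * Real.exp (β*Eg - β*ε*((n:ℝ)-1))) / Real.exp (β * Eg) := by
          apply div_le_div₀ (by positivity) hnum (Real.exp_pos _) hden
      _ = 2^n * Real.exp (-β*ε*((n:ℝ)-1)) := by
          rw [mul_div_assoc, ← Real.exp_sub]
          ring_nf
  -- Step 5 : Dirichlet form bound and conclusion
  have hPr0 : 0 ≤ gExp E0 Finset.univ η D :=
    gExp_nonneg _ _ _ _ fun σ => by rcases hD01 σ with h | h <;> rw [h] <;> norm_num
  have hdir : dirich E0 Finset.univ η f0
      ≤ (n:ℝ) * ((1/4) * gExp E0 Finset.univ η D) := by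
    unfold dirich
    calc ∑ x : V, gExp E0 Finset.univ η (fun σ => gVar E0 {x} σ f0)
        ≤ ∑ _x : V, gExp E0 Finset.univ η (fun σ => (1/4) * D σ) :=
          Finset.sum_le_sum fun x _ => gExp_mono _ _ _ _ _ (fun σ => hsite x σ)
      _ = ∑ _x : V, (1/4) * gExp E0 Finset.univ η D := by
          refine Finset.sum_congr rfl fun x _ => ?_
          rw [gExp_smul]
      _ = (n:ℝ) * ((1/4) * gExp E0 Finset.univ η D) := by
          rw [Finset.sum_const, Finset.card_univ, nsmul_eq_mul, hn]
  have hmem : dirich E0 Finset.univ η f0 / gVar E0 Finset.univ η f0 ∈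
      {r : ℝ | ∃ f : (V → Bool) → ℝ, gVar E0 Finset.univ η f ≠ 0
        ∧ r = dirich E0 Finset.univ η f / gVar E0 Finset.univ η f} :=
    ⟨f0, by rw [hVar]; norm_num, rfl⟩
  have hbdd : BddBelow {r : ℝ | ∃ f : (V → Bool) → ℝ, gVar E0 Finset.univ η f ≠ 0
      ∧ r = dirich E0 Finset.univ η f / gVar E0 Finset.univ η f} := by
    refine ⟨0, fun r hr => ?_⟩
    obtain ⟨f, hf, rfl⟩ := hr
    exact div_nonneg (dirich_nonneg _ _ _ _) (gVar_nonneg _ _ _ _)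
  have hcs : cgap E0 Finset.univ η
      ≤ dirich E0 Finset.univ η f0 / gVar E0 Finset.univ η f0 :=
    csInf_le hbdd hmem
  have hfin : dirich E0 Finset.univ η f0 / gVar E0 Finset.univ η f0
      ≤ 2 * ((n:ℝ) + 2) * 2^n * Real.exp (-β*ε*((n:ℝ)-1)) := by
    rw [hVar]
    have h4 : dirich E0 Finset.univ η f0 / (1/4) = 4 * dirich E0 Finset.univ η f0 := by
      ring
    rw [h4]
    have hchain : 4 * dirich E0 Finset.univ η f0 ≤ (n:ℝ) * gExp E0 Finset.univ η D := by
      nlinarith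
    have hlast : (n:ℝ) * gExp E0 Finset.univ η D
        ≤ 2 * ((n:ℝ) + 2) * 2^n * Real.exp (-β*ε*((n:ℝ)-1)) := by
      have h1 : (n:ℝ) * gExp E0 Finset.univ η D
          ≤ (n:ℝ) * (2^n * Real.exp (-β*ε*((n:ℝ)-1))) := by
        apply mul_le_mul_of_nonneg_left hPr (by positivity)
      have h2 : (n:ℝ) * (2^n * Real.exp (-β*ε*((n:ℝ)-1)))
          ≤ 2 * ((n:ℝ) + 2) * 2^n * Real.exp (-β*ε*((n:ℝ)-1)) := by
        have hx : (0:ℝ) ≤ 2^n * Real.exp (-β*ε*((n:ℝ)-1)) := by positivity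
        nlinarith [Nat.cast_nonneg (α := ℝ) n]
      linarith
    linarith
  calc cgap E0 Finset.univ η ≤ _ := hcs
    _ ≤ _ := hfin

end IsingGlauber
open Filter
/-- Proposition 5.4 of the paper: on a finite connected graph with odd
`n = |V|` and edge isoperimetric constant at least `ε > 0`, the free-boundary
heat-bath Glauber dynamics has spectral gap at most `2(n+2) 2^n e^{-βε(n-1)}`;
in particular, for every `β > log 2 / ε` there is `θ > 0` with
`c_gap(μ) ≤ e^{-θn}` for all sufficiently large `n`. -/
theorem statement18 (ε : ℝ) (hε : 0 < ε) :
    (∀ (V : Type) (_ : Fintype V) (_ : DecidableEq V) (G : SimpleGraph V),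
      G.Connected → Odd (Fintype.card V) →
      (∀ S : Finset V, S.Nonempty → 2 * S.card ≤ Fintype.card V →
        ε * (S.card : ℝ) ≤ (((S ×ˢ Sᶜ).filter (fun p => G.Adj p.1 p.2)).card : ℝ)) →
      ∀ β : ℝ, 0 < β →
        cgap (fun σ => β * energyF G Finset.univ σ) Finset.univ (fun _ => true) ≤
          2 * ((Fintype.card V : ℝ) + 2) * 2 ^ Fintype.card V *
            Real.exp (-β * ε * ((Fintype.card V : ℝ) - 1))) ∧
    ∀ β : ℝ, Real.log 2 / ε < β → ∃ θ : ℝ, 0 < θ ∧ ∃ N : ℕ,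
      ∀ (V : Type) (_ : Fintype V) (_ : DecidableEq V) (G : SimpleGraph V),
        G.Connected → Odd (Fintype.card V) →
        (∀ S : Finset V, S.Nonempty → 2 * S.card ≤ Fintype.card V →
          ε * (S.card : ℝ) ≤ (((S ×ˢ Sᶜ).filter (fun p => G.Adj p.1 p.2)).card : ℝ)) →
        N ≤ Fintype.card V →
        cgap (fun σ => β * energyF G Finset.univ σ) Finset.univ (fun _ => true) ≤
          Real.exp (-θ * (Fintype.card V : ℝ)) := by
  constructor
  · intro V instF instD G _ hodd hiso β hβ
    exact core_bound ε hε G hodd hiso β hβ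
  · intro β hβ
    have hβε : Real.log 2 < β * ε := (div_lt_iff₀ hε).mp hβ
    have hβ0 : 0 < β := by
      have h1 : 0 < Real.log 2 / ε := div_pos (Real.log_pos one_lt_two) hε
      linarith
    set θ : ℝ := (β * ε - Real.log 2) / 2 with hθ
    have hθ0 : 0 < θ := by rw [hθ]; linarith
    refine ⟨θ, hθ0, ?_⟩
    -- the prefactor tends to zero
    have h1 : Tendsto (fun x : ℝ => (x + 2) * Real.exp (-θ * x)) atTop (nhds 0) := by
      have ha : Tendsto (fun x : ℝ => θ * x) atTop atTop :=
        Tendsto.const_mul_atTop hθ0 tendsto_id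
      have hb := (Real.tendsto_pow_mul_exp_neg_atTop_nhds_zero 1).comp ha
      have hc : Tendsto (fun x : ℝ => Real.exp (-θ * x)) atTop (nhds 0) := by
        refine (Real.tendsto_exp_atBot.comp (tendsto_neg_atTop_atBot.comp ha)).congr
          fun x => ?_
        show Real.exp (-(θ * x)) = Real.exp (-θ * x)
        rw [neg_mul]
      have hd : Tendsto (fun x : ℝ => θ⁻¹ * ((θ * x) ^ 1 * Real.exp (-(θ * x))))
          atTop (nhds 0) := by
        simpa using hb.const_mul θ⁻¹
      have hsum : Tendsto (fun x : ℝ => θ⁻¹ * ((θ * x) ^ 1 * Real.exp (-(θ * x)))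
          + 2 * Real.exp (-θ * x)) atTop (nhds 0) := by
        simpa using hd.add (hc.const_mul 2)
      refine Tendsto.congr (fun x => ?_) hsum
      have hθne : θ ≠ 0 := ne_of_gt hθ0
      field_simp
    have htd : Tendsto (fun n : ℕ =>
        2 * Real.exp (β * ε) * (((n : ℝ) + 2) * Real.exp (-θ * (n : ℝ))))
        atTop (nhds 0) := by
      have := (h1.comp tendsto_natCast_atTop_atTop).const_mul (2 * Real.exp (β * ε))
      simpa [Function.comp] using this
    obtain ⟨N, hN⟩ := Filter.eventually_atTop.mp
      (htd.eventually_lt_const (by norm_num : (0:ℝ) < 1))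
    refine ⟨N, ?_⟩
    intro V instF instD G hconn hodd hiso hcard
    have hcg := core_bound ε hε G hodd hiso β hβ0
    set n := Fintype.card V with hn
    have hKn : 2 * Real.exp (β * ε) * (((n : ℝ) + 2) * Real.exp (-θ * (n : ℝ))) < 1 :=
      hN n hcard
    have hexp : (2:ℝ)^n * Real.exp (-β*ε*((n:ℝ)-1))
        = Real.exp (β*ε) * (Real.exp (-θ*(n:ℝ)) * Real.exp (-θ*(n:ℝ))) := by
      have h2n : ((2:ℝ))^n = Real.exp ((n:ℝ) * Real.log 2) := by
        rw [Real.exp_nat_mul, Real.exp_log (by norm_num : (0:ℝ) < 2)]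
      rw [h2n, ← Real.exp_add, ← Real.exp_add, ← Real.exp_add]
      congr 1
      rw [hθ]
      ring
    have hbound : 2*((n:ℝ)+2)*2^n*Real.exp (-β*ε*((n:ℝ)-1))
        = (2 * Real.exp (β * ε) * (((n : ℝ) + 2) * Real.exp (-θ * (n : ℝ))))
          * Real.exp (-θ*(n:ℝ)) := by
      calc 2*((n:ℝ)+2)*2^n*Real.exp (-β*ε*((n:ℝ)-1))
          = 2*((n:ℝ)+2) * ((2:ℝ)^n * Real.exp (-β*ε*((n:ℝ)-1))) := by ring
        _ = 2*((n:ℝ)+2) * (Real.exp (β*ε) * (Real.exp (-θ*(n:ℝ))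
            * Real.exp (-θ*(n:ℝ)))) := by rw [hexp]
        _ = _ := by ring
    calc cgap (fun σ => β * energyF G Finset.univ σ) Finset.univ (fun _ => true)
        ≤ 2*((n:ℝ)+2)*2^n*Real.exp (-β*ε*((n:ℝ)-1)) := hcg
      _ = (2 * Real.exp (β * ε) * (((n : ℝ) + 2) * Real.exp (-θ * (n : ℝ))))
          * Real.exp (-θ*(n:ℝ)) := hbound
      _ ≤ 1 * Real.exp (-θ*(n:ℝ)) :=
          mul_le_mul_of_nonneg_right hKn.le (Real.exp_nonneg _)
      _ = Real.exp (-θ*(n:ℝ)) := one_mul _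
end
end
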